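/- arXiv:1102.4587 — 5 statements merged into one kernel-verified Lean document; each statement's English description precedes it below -/
import Mathlib

section
/- Let p ≥ 1 and let ω(R) := |f|^p_{p-var;R} for f : [0,T]^2 → ℝ of finite controlled p-variation. For adjacent rectangles [a,b]×[s,t] and [a,b]×[t,u], one has ω([a,b]×[s,u]) ≤ ω([a,b]×[s,t]) + ω([a,b]×[t,u]) + p·2^{p−1}·ω([a,b]×[s,u])^{1−1/p}·min{ω([a,b]×[s,t]), ω([a,b]×[t,u])}^{1/p}. -/
open Set
open scoped ENNReal NNReal

/-- A closed rectangle `[a,b] × [c,d] ⊆ ℝ²`, encoded by its four corner coordinates. -/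
structure Rect where
  a : ℝ
  b : ℝ
  c : ℝ
  d : ℝ

noncomputable instance : DecidableEq Rect := fun _ _ => Classical.dec _

/-- The closed rectangle as a subset of the plane. -/
def Rect.toSet (R : Rect) : Set (ℝ × ℝ) := Set.Icc R.a R.b ×ˢ Set.Icc R.c R.d

/-- The open interior of the rectangle. -/
def Rect.openSet (R : Rect) : Set (ℝ × ℝ) := Set.Ioo R.a R.b ×ˢ Set.Ioo R.c R.d

/-- The rectangle is well formed: `a ≤ b`, `c ≤ d`. -/
def Rect.Valid (R : Rect) : Prop := R.a ≤ R.b ∧ R.c ≤ R.d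

/-- Rectangular increment of `f` over `[a,b] × [c,d]`. -/
def Rect.inc (f : ℝ × ℝ → ℝ) (R : Rect) : ℝ :=
  f (R.b, R.d) - f (R.a, R.d) - f (R.b, R.c) + f (R.a, R.c)

/-- `P` is a partition of `R` into essentially disjoint rectangles. -/
def IsPartition (R : Rect) (P : Finset Rect) : Prop :=
  (∀ Q ∈ P, Q.Valid) ∧
  ((P : Set Rect).Pairwise fun Q Q' => Disjoint Q.openSet Q'.openSet) ∧
  (⋃ Q ∈ P, Q.toSet) = R.toSet

/-- The controlled `p`-variation of `f` over `R`, raised to the power `p`: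
`sup` over all partitions of `R` into essentially disjoint rectangles of
`Σ |f(A)|^p`.  So `|f|_{p-var;R} = (cVarSum p f R) ^ (1/p)`. -/
noncomputable def cVarSum (p : ℝ) (f : ℝ × ℝ → ℝ) (R : Rect) : ℝ≥0∞ :=
  ⨆ (P : Finset Rect) (_ : IsPartition R P),
    ∑ Q ∈ P, ENNReal.ofReal |Rect.inc f Q| ^ p

/-- The grid `p`-variation of `f` over `R`, raised to the power `p`:
`sup` over grid-like partitions (products of dissections of the two sides)
of `Σ_{i,j} |f([t_i,t_{i+1}] × [s_j,s_{j+1}])|^p`.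
So `V_p(f;R) = (gridVarSum p f R) ^ (1/p)`. -/
noncomputable def gridVarSum (p : ℝ) (f : ℝ × ℝ → ℝ) (R : Rect) : ℝ≥0∞ :=
  ⨆ (n : ℕ) (m : ℕ) (t : Fin (n+1) → ℝ) (s : Fin (m+1) → ℝ)
    (_ : Monotone t) (_ : Monotone s)
    (_ : t 0 = R.a) (_ : t (Fin.last n) = R.b)
    (_ : s 0 = R.c) (_ : s (Fin.last m) = R.d),
    ∑ i : Fin n, ∑ j : Fin m,
      ENNReal.ofReal |Rect.inc f ⟨t i.castSucc, t i.succ, s j.castSucc, s j.succ⟩| ^ p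


namespace Sub11

def low (t : ℝ) (Q : Rect) : Rect := ⟨Q.a, Q.b, min Q.c t, min Q.d t⟩
def high (t : ℝ) (Q : Rect) : Rect := ⟨Q.a, Q.b, max Q.c t, max Q.d t⟩

lemma inc_split (f : ℝ × ℝ → ℝ) (t : ℝ) (Q : Rect) :
    Rect.inc f Q = Rect.inc f (low t Q) + Rect.inc f (high t Q) := by
  rcases le_total Q.c t with h1 | h1 <;> rcases le_total Q.d t with h2 | h2 <;>
    simp only [Rect.inc, low, high, min_eq_left h1, min_eq_right h1, min_eq_left h2,
      min_eq_right h2, max_eq_right h1, max_eq_left h1, max_eq_right h2, max_eq_left h2] <;>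
    ring

lemma inc_zero_left (f : ℝ × ℝ → ℝ) {Q : Rect} (h : Q.a = Q.b) : Rect.inc f Q = 0 := by
  simp only [Rect.inc, h]; ring

lemma inc_zero_bot (f : ℝ × ℝ → ℝ) {Q : Rect} (h : Q.c = Q.d) : Rect.inc f Q = 0 := by
  simp only [Rect.inc, h]; ring

lemma low_valid {t : ℝ} {Q : Rect} (h : Q.Valid) : (low t Q).Valid :=
  ⟨h.1, min_le_min_right t h.2⟩

lemma high_valid {t : ℝ} {Q : Rect} (h : Q.Valid) : (high t Q).Valid :=
  ⟨h.1, max_le_max_right t h.2⟩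

lemma mem_openSet {Q : Rect} {x : ℝ × ℝ} :
    x ∈ Q.openSet ↔ (Q.a < x.1 ∧ x.1 < Q.b) ∧ Q.c < x.2 ∧ x.2 < Q.d := by
  simp [Rect.openSet, Set.mem_prod, Set.mem_Ioo]

lemma mem_toSet {Q : Rect} {x : ℝ × ℝ} :
    x ∈ Q.toSet ↔ (Q.a ≤ x.1 ∧ x.1 ≤ Q.b) ∧ Q.c ≤ x.2 ∧ x.2 ≤ Q.d := by
  simp [Rect.toSet, Set.mem_prod, Set.mem_Icc, Prod.le_def]; tauto

lemma low_open_lt {t : ℝ} {Q : Rect} {x : ℝ × ℝ} (hx : x ∈ (low t Q).openSet) : x.2 < t :=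
  lt_of_lt_of_le (mem_openSet.1 hx).2.2 (min_le_right _ _)

lemma high_open_gt {t : ℝ} {Q : Rect} {x : ℝ × ℝ} (hx : x ∈ (high t Q).openSet) : t < x.2 :=
  lt_of_le_of_lt (le_max_right _ _) (mem_openSet.1 hx).2.1

lemma low_open_subset {t : ℝ} {Q : Rect} : (low t Q).openSet ⊆ Q.openSet := by
  intro x hx
  have h := mem_openSet.1 hx
  simp only [low] at h
  have hxt : x.2 < t := low_open_lt hx
  rcases le_total Q.c t with hc | hc
  · exact mem_openSet.2 ⟨h.1, by simpa [min_eq_left hc] using h.2.1,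
      lt_of_lt_of_le h.2.2 (min_le_left _ _)⟩
  · exact absurd (by simpa [min_eq_right hc] using h.2.1) (not_lt.2 hxt.le)

lemma high_open_subset {t : ℝ} {Q : Rect} : (high t Q).openSet ⊆ Q.openSet := by
  intro x hx
  have h := mem_openSet.1 hx
  simp only [high] at h
  have hxt : t < x.2 := high_open_gt hx
  rcases le_total t Q.d with hd | hd
  · exact mem_openSet.2 ⟨h.1, lt_of_le_of_lt (le_max_left _ _) h.2.1,
      by simpa [max_eq_left hd] using h.2.2⟩
  · exact absurd (by simpa [max_eq_right hd] using h.2.2) (not_lt.2 hxt.le)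

lemma subset_of_partition {R : Rect} {P : Finset Rect} (hP : IsPartition R P) {Q : Rect}
    (hQ : Q ∈ P) : Q.toSet ⊆ R.toSet := by
  rw [← hP.2.2]
  exact Set.subset_biUnion_of_mem hQ

lemma bounds {R : Rect} {P : Finset Rect} (hP : IsPartition R P) {Q : Rect} (hQ : Q ∈ P) :
    R.a ≤ Q.a ∧ Q.b ≤ R.b ∧ R.c ≤ Q.c ∧ Q.d ≤ R.d := by
  have hv := hP.1 Q hQ
  have h1 := subset_of_partition hP hQ
    ((mem_toSet (x := (Q.a, Q.c))).2 ⟨⟨le_rfl, hv.1⟩, le_rfl, hv.2⟩)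
  have h2 := subset_of_partition hP hQ
    ((mem_toSet (x := (Q.b, Q.d))).2 ⟨⟨hv.1, le_rfl⟩, hv.2, le_rfl⟩)
  exact ⟨(mem_toSet.1 h1).1.1, (mem_toSet.1 h2).1.2, (mem_toSet.1 h1).2.1, (mem_toSet.1 h2).2.2⟩

lemma isPartition_low {a b s t u : ℝ} (hst : s ≤ t) (htu : t ≤ u)
    {P : Finset Rect} (hP : IsPartition (Rect.mk a b s u) P) :
    IsPartition (Rect.mk a b s t) (P.image (low t)) := by
  obtain ⟨hval, hdisj, hcov⟩ := hP
  refine ⟨?_, ?_, ?_⟩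
  · intro A hA; obtain ⟨Q, hQ, rfl⟩ := Finset.mem_image.1 hA
    exact low_valid (hval Q hQ)
  · intro A hA B hB hAB
    obtain ⟨Q, hQ, rfl⟩ := Finset.mem_image.1 (Finset.mem_coe.1 hA)
    obtain ⟨Q', hQ', rfl⟩ := Finset.mem_image.1 (Finset.mem_coe.1 hB)
    have hne : Q ≠ Q' := fun h => hAB (by rw [h])
    exact (hdisj (Finset.mem_coe.2 hQ) (Finset.mem_coe.2 hQ') hne).mono
      low_open_subset low_open_subset
  · apply Set.Subset.antisymm
    · intro x hx
      simp only [Set.mem_iUnion, Finset.mem_coe, exists_prop] at hx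
      obtain ⟨A, hA, hxA⟩ := hx
      obtain ⟨Q, hQ, rfl⟩ := Finset.mem_image.1 hA
      have hb := bounds ⟨hval, hdisj, hcov⟩ hQ
      have h := mem_toSet.1 hxA
      simp only [low] at h
      exact mem_toSet.2 ⟨⟨le_trans hb.1 h.1.1, le_trans h.1.2 hb.2.1⟩,
        le_trans (le_min hb.2.2.1 hst) h.2.1, le_trans h.2.2 (min_le_right _ _)⟩
    · intro x hx
      have hx0 := mem_toSet.1 hx
      have hx' : x ∈ (Rect.mk a b s u).toSet :=
        mem_toSet.2 ⟨hx0.1, hx0.2.1, le_trans hx0.2.2 htu⟩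
      rw [← hcov] at hx'
      simp only [Set.mem_iUnion, Finset.mem_coe, exists_prop] at hx' ⊢
      obtain ⟨Q, hQ, hxQ⟩ := hx'
      refine ⟨low t Q, Finset.mem_image_of_mem _ hQ, ?_⟩
      have h := mem_toSet.1 hxQ
      refine mem_toSet.2 ⟨h.1, ?_, ?_⟩ <;> simp only [low]
      · exact le_trans (min_le_left _ _) h.2.1
      · exact le_min h.2.2 hx0.2.2

lemma isPartition_high {a b s t u : ℝ} (hst : s ≤ t) (htu : t ≤ u)
    {P : Finset Rect} (hP : IsPartition (Rect.mk a b s u) P) :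
    IsPartition (Rect.mk a b t u) (P.image (high t)) := by
  obtain ⟨hval, hdisj, hcov⟩ := hP
  refine ⟨?_, ?_, ?_⟩
  · intro A hA; obtain ⟨Q, hQ, rfl⟩ := Finset.mem_image.1 hA
    exact high_valid (hval Q hQ)
  · intro A hA B hB hAB
    obtain ⟨Q, hQ, rfl⟩ := Finset.mem_image.1 (Finset.mem_coe.1 hA)
    obtain ⟨Q', hQ', rfl⟩ := Finset.mem_image.1 (Finset.mem_coe.1 hB)
    have hne : Q ≠ Q' := fun h => hAB (by rw [h])
    exact (hdisj (Finset.mem_coe.2 hQ) (Finset.mem_coe.2 hQ') hne).mono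
      high_open_subset high_open_subset
  · apply Set.Subset.antisymm
    · intro x hx
      simp only [Set.mem_iUnion, Finset.mem_coe, exists_prop] at hx
      obtain ⟨A, hA, hxA⟩ := hx
      obtain ⟨Q, hQ, rfl⟩ := Finset.mem_image.1 hA
      have hb := bounds ⟨hval, hdisj, hcov⟩ hQ
      have h := mem_toSet.1 hxA
      simp only [high] at h
      exact mem_toSet.2 ⟨⟨le_trans hb.1 h.1.1, le_trans h.1.2 hb.2.1⟩,
        le_trans (le_max_right _ _) h.2.1, le_trans h.2.2 (max_le hb.2.2.2 htu)⟩
    · intro x hx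
      have hx0 := mem_toSet.1 hx
      have hx' : x ∈ (Rect.mk a b s u).toSet :=
        mem_toSet.2 ⟨hx0.1, le_trans hst hx0.2.1, hx0.2.2⟩
      rw [← hcov] at hx'
      simp only [Set.mem_iUnion, Finset.mem_coe, exists_prop] at hx' ⊢
      obtain ⟨Q, hQ, hxQ⟩ := hx'
      refine ⟨high t Q, Finset.mem_image_of_mem _ hQ, ?_⟩
      have h := mem_toSet.1 hxQ
      refine mem_toSet.2 ⟨h.1, ?_, ?_⟩ <;> simp only [high]
      · exact max_le h.2.1 hx0.2.1
      · exact le_trans h.2.2 (le_max_left _ _)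

lemma isPartition_union {a b s t u : ℝ} (hst : s ≤ t) (htu : t ≤ u)
    {P : Finset Rect} (hP : IsPartition (Rect.mk a b s u) P) :
    IsPartition (Rect.mk a b s u) (P.image (low t) ∪ P.image (high t)) := by
  have hl := isPartition_low hst htu hP
  have hh := isPartition_high hst htu hP
  refine ⟨?_, ?_, ?_⟩
  · intro A hA
    rcases Finset.mem_union.1 hA with h | h
    exacts [hl.1 A h, hh.1 A h]
  · intro A hA B hB hAB
    have hlh : ∀ (QA QB : Rect), Disjoint (low t QA).openSet (high t QB).openSet :=
      fun QA QB => Set.disjoint_left.2 fun x hx hx' =>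
        absurd (high_open_gt hx') (not_lt.2 (low_open_lt hx).le)
    rcases Finset.mem_union.1 (Finset.mem_coe.1 hA) with h1 | h1 <;>
      rcases Finset.mem_union.1 (Finset.mem_coe.1 hB) with h2 | h2
    · exact hl.2.1 (Finset.mem_coe.2 h1) (Finset.mem_coe.2 h2) hAB
    · obtain ⟨Q, _, rfl⟩ := Finset.mem_image.1 h1
      obtain ⟨Q', _, rfl⟩ := Finset.mem_image.1 h2
      exact hlh Q Q'
    · obtain ⟨Q, _, rfl⟩ := Finset.mem_image.1 h1
      obtain ⟨Q', _, rfl⟩ := Finset.mem_image.1 h2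
      exact (hlh Q' Q).symm
    · exact hh.2.1 (Finset.mem_coe.2 h1) (Finset.mem_coe.2 h2) hAB
  · have hsplit : ⋃ A ∈ (P.image (low t) ∪ P.image (high t)), A.toSet =
        (⋃ A ∈ P.image (low t), A.toSet) ∪ ⋃ A ∈ P.image (high t), A.toSet :=
      Finset.set_biUnion_union _ _ _
    rw [hsplit, hl.2.2, hh.2.2]
    simp only [Rect.toSet]
    rw [← Set.prod_union, Set.Icc_union_Icc_eq_Icc hst htu]

lemma strict_of_inc_ne {f : ℝ × ℝ → ℝ} {A : Rect} (hv : A.Valid) (h : Rect.inc f A ≠ 0) :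
    A.a < A.b ∧ A.c < A.d :=
  ⟨lt_of_le_of_ne hv.1 fun e => h (inc_zero_left f e),
   lt_of_le_of_ne hv.2 fun e => h (inc_zero_bot f e)⟩

lemma open_nonempty {A : Rect} (h1 : A.a < A.b) (h2 : A.c < A.d) : A.openSet.Nonempty :=
  ⟨((A.a + A.b) / 2, (A.c + A.d) / 2),
    mem_openSet.2 ⟨⟨by dsimp; linarith, by dsimp; linarith⟩, by dsimp; linarith,
      by dsimp; linarith⟩⟩

lemma inj_aux {f : ℝ × ℝ → ℝ} {R : Rect} {P : Finset Rect} (hP : IsPartition R P)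
    (φ : Rect → Rect) (hφv : ∀ Q : Rect, Q.Valid → (φ Q).Valid)
    (hφo : ∀ Q : Rect, (φ Q).openSet ⊆ Q.openSet) :
    ∀ Q ∈ P, ∀ Q' ∈ P, Rect.inc f (φ Q) ≠ 0 → Rect.inc f (φ Q') ≠ 0 → φ Q = φ Q' → Q = Q' := by
  intro Q hQ Q' hQ' h h' he
  by_contra hne
  have hdis := hP.2.1 (Finset.mem_coe.2 hQ) (Finset.mem_coe.2 hQ') hne
  have hstrict := strict_of_inc_ne (hφv Q (hP.1 Q hQ)) h
  obtain ⟨x, hx⟩ := open_nonempty hstrict.1 hstrict.2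
  exact Set.disjoint_left.1 hdis (hφo Q hx) (hφo Q' (he ▸ hx))

lemma sum_comp_eq {p : ℝ} (hp : 0 < p) (f : ℝ × ℝ → ℝ) (P : Finset Rect) (φ : Rect → Rect)
    (hinj : ∀ Q ∈ P, ∀ Q' ∈ P,
      Rect.inc f (φ Q) ≠ 0 → Rect.inc f (φ Q') ≠ 0 → φ Q = φ Q' → Q = Q') :
    ∑ Q ∈ P, ENNReal.ofReal |Rect.inc f (φ Q)| ^ p
      = ∑ A ∈ (P.filter fun Q => Rect.inc f (φ Q) ≠ 0).image φ,
          ENNReal.ofReal |Rect.inc f A| ^ p := by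
  rw [Finset.sum_image fun x hx y hy he =>
    hinj x (Finset.mem_filter.1 hx).1 y (Finset.mem_filter.1 hy).1
      (Finset.mem_filter.1 hx).2 (Finset.mem_filter.1 hy).2 he]
  rw [Finset.sum_filter_of_ne]
  intro x _ hne h0
  exact hne (by simp [h0, ENNReal.zero_rpow_of_pos hp])

lemma le_cVarSum {p : ℝ} {f : ℝ × ℝ → ℝ} {R : Rect} {P : Finset Rect} (hP : IsPartition R P) :
    ∑ Q ∈ P, ENNReal.ofReal |Rect.inc f Q| ^ p ≤ cVarSum p f R :=
  le_iSup₂_of_le P hP le_rfl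

lemma rpow_add_le {p : ℝ} (hp : 1 ≤ p) {u v : ℝ} (hu : 0 ≤ u) (hv : 0 ≤ v) :
    (u + v) ^ p ≤ u ^ p + p * (u + v) ^ (p - 1) * v := by
  rcases eq_or_lt_of_le hv with rfl | hv'
  · simp
  have hcont : ContinuousOn (fun x : ℝ => x ^ p) (Set.Icc u (u + v)) := fun x _ =>
    (Real.continuousAt_rpow_const x p (Or.inr (by linarith))).continuousWithinAt
  obtain ⟨c, hc, hceq⟩ := exists_hasDerivAt_eq_slope (fun x : ℝ => x ^ p)
    (fun x => p * x ^ (p - 1)) (by linarith) hcont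
    (fun x _ => Real.hasDerivAt_rpow_const (Or.inr hp))
  have hc0 : 0 ≤ c := le_trans hu hc.1.le
  have hcle : c ^ (p - 1) ≤ (u + v) ^ (p - 1) :=
    Real.rpow_le_rpow hc0 hc.2.le (by linarith)
  rw [show u + v - u = v by ring] at hceq
  rw [eq_div_iff hv'.ne'] at hceq
  have h5 : p * c ^ (p - 1) * v ≤ p * (u + v) ^ (p - 1) * v :=
    mul_le_mul_of_nonneg_right (mul_le_mul_of_nonneg_left hcle (by linarith)) hv
  linarith

lemma scalar_ineq {p : ℝ} (hp : 1 ≤ p) {X Y Z : ℝ} (hX : 0 ≤ X) (hY : 0 ≤ Y) (hZ : 0 ≤ Z)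
    (h : Z ≤ X + Y) :
    Z ^ p ≤ X ^ p + Y ^ p + p * 2 ^ (p - 1) * (max X Y ^ (p - 1) * min X Y) := by
  have hu : 0 ≤ max X Y := le_trans hX (le_max_left _ _)
  have hv : 0 ≤ min X Y := le_min hX hY
  have hvu : min X Y ≤ max X Y := min_le_max
  have huv : max X Y + min X Y = X + Y := max_add_min X Y
  have h1 : Z ^ p ≤ (max X Y + min X Y) ^ p := by
    rw [huv]; exact Real.rpow_le_rpow hZ h (by linarith)
  have h2 := rpow_add_le hp hu hv
  have h3 : (max X Y + min X Y) ^ (p - 1) ≤ 2 ^ (p - 1) * max X Y ^ (p - 1) := by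
    calc (max X Y + min X Y) ^ (p - 1) ≤ (2 * max X Y) ^ (p - 1) :=
          Real.rpow_le_rpow (by linarith) (by linarith) (by linarith)
      _ = 2 ^ (p - 1) * max X Y ^ (p - 1) := Real.mul_rpow (by norm_num) hu
  have h4 : max X Y ^ p ≤ X ^ p + Y ^ p := by
    rcases le_total X Y with hxy | hxy
    · rw [max_eq_right hxy]; nlinarith [Real.rpow_nonneg hX p]
    · rw [max_eq_left hxy]; nlinarith [Real.rpow_nonneg hY p]
  have h5 : p * (max X Y + min X Y) ^ (p - 1) * min X Y ≤
      p * 2 ^ (p - 1) * (max X Y ^ (p - 1) * min X Y) := by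
    calc p * (max X Y + min X Y) ^ (p - 1) * min X Y
        ≤ p * (2 ^ (p - 1) * max X Y ^ (p - 1)) * min X Y :=
          mul_le_mul_of_nonneg_right (mul_le_mul_of_nonneg_left h3 (by linarith)) hv
      _ = p * 2 ^ (p - 1) * (max X Y ^ (p - 1) * min X Y) := by ring
  linarith

lemma holder_aux {ι : Type*} (s : Finset ι) (A B : ι → ℝ≥0∞) {p : ℝ} (hp : 1 ≤ p) :
    ∑ i ∈ s, A i ^ (p - 1) * B i ≤
      (∑ i ∈ s, A i ^ p) ^ (1 - 1 / p) * (∑ i ∈ s, B i ^ p) ^ (1 / p) := by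
  rcases eq_or_lt_of_le hp with rfl | hp1
  · norm_num
  · have hpq : p.HolderConjugate (p / (p - 1)) := Real.HolderConjugate.conjExponent hp1
    have h := ENNReal.inner_le_Lp_mul_Lq (s := s) (fun i => A i ^ (p - 1)) B hpq.symm
    have he : ∀ i : ι, (A i ^ (p - 1)) ^ (p / (p - 1)) = A i ^ p := by
      intro i
      rw [← ENNReal.rpow_mul]
      congr 1
      field_simp [sub_ne_zero.2 hp1.ne']
    have h2 : 1 / (p / (p - 1)) = 1 - 1 / p := by
      rw [one_div_div]
      field_simp [sub_ne_zero.2 hp1.ne']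
    simp only [he, h2] at h
    exact h

lemma perQ' {p : ℝ} (hp : 1 ≤ p) (X Y Z : ℝ) (hX : 0 ≤ X) (hY : 0 ≤ Y) (hZ : 0 ≤ Z)
    (hsc : Z ^ p ≤ X ^ p + Y ^ p + p * 2 ^ (p - 1) * (max X Y ^ (p - 1) * min X Y)) :
    ENNReal.ofReal Z ^ p ≤
      ENNReal.ofReal X ^ p + ENNReal.ofReal Y ^ p +
      ENNReal.ofReal (p * 2 ^ (p - 1)) *
        (max (ENNReal.ofReal X) (ENNReal.ofReal Y) ^ (p - 1) *
          min (ENNReal.ofReal X) (ENNReal.ofReal Y)) := by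
  have hmono : Monotone ENNReal.ofReal := fun _ _ h => ENNReal.ofReal_le_ofReal h
  have hp0 : (0:ℝ) ≤ p := by linarith
  have hp1 : (0:ℝ) ≤ p - 1 := by linarith
  have hu : (0:ℝ) ≤ max X Y := le_trans hX (le_max_left _ _)
  have hC : (0:ℝ) ≤ p * 2 ^ (p - 1) := mul_nonneg hp0 (Real.rpow_nonneg (by norm_num) _)
  rw [← hmono.map_max, ← hmono.map_min,
    ENNReal.ofReal_rpow_of_nonneg hZ hp0, ENNReal.ofReal_rpow_of_nonneg hX hp0,
    ENNReal.ofReal_rpow_of_nonneg hY hp0, ENNReal.ofReal_rpow_of_nonneg hu hp1,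
    ← ENNReal.ofReal_mul (Real.rpow_nonneg hu _), ← ENNReal.ofReal_mul hC,
    ← ENNReal.ofReal_add (Real.rpow_nonneg hX _) (Real.rpow_nonneg hY _),
    ← ENNReal.ofReal_add (add_nonneg (Real.rpow_nonneg hX _) (Real.rpow_nonneg hY _))
      (mul_nonneg hC (mul_nonneg (Real.rpow_nonneg hu _) (le_min hX hY)))]
  exact ENNReal.ofReal_le_ofReal hsc

end Sub11

/-- almost sub-additivity of `ω(R) = |f|^p_{p-var;R}` for adjacent
rectangles `[a,b]×[s,t]` and `[a,b]×[t,u]`: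
`ω([a,b]×[s,u]) ≤ ω([a,b]×[s,t]) + ω([a,b]×[t,u])
  + p 2^{p-1} ω([a,b]×[s,u])^{1-1/p} min{ω([a,b]×[s,t]), ω([a,b]×[t,u])}^{1/p}`. -/
theorem controlled_var_almost_subadditive (p T : ℝ) (hp : 1 ≤ p) (hT : 0 < T)
    (f : ℝ × ℝ → ℝ) (hf : cVarSum p f (Rect.mk 0 T 0 T) ≠ ⊤)
    (a b s t u : ℝ) (h0a : 0 ≤ a) (hab : a ≤ b) (hbT : b ≤ T)
    (h0s : 0 ≤ s) (hst : s ≤ t) (htu : t ≤ u) (huT : u ≤ T) :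
    cVarSum p f (Rect.mk a b s u) ≤
      cVarSum p f (Rect.mk a b s t) + cVarSum p f (Rect.mk a b t u) +
        ENNReal.ofReal (p * 2 ^ (p - 1)) *
          cVarSum p f (Rect.mk a b s u) ^ (1 - 1 / p) *
          (min (cVarSum p f (Rect.mk a b s t)) (cVarSum p f (Rect.mk a b t u))) ^ (1 / p) := by
  classical
  have hp0 : (0:ℝ) < p := by linarith
  refine iSup₂_le fun P hP => ?_
  have hinj_low := Sub11.inj_aux (f := f) hP (Sub11.low t)
    (fun _ hv => Sub11.low_valid hv) (fun _ => Sub11.low_open_subset)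
  have hinj_high := Sub11.inj_aux (f := f) hP (Sub11.high t)
    (fun _ hv => Sub11.high_valid hv) (fun _ => Sub11.high_open_subset)
  set x : Rect → ℝ≥0∞ := fun Q => ENNReal.ofReal |Rect.inc f (Sub11.low t Q)| with hxdef
  set y : Rect → ℝ≥0∞ := fun Q => ENNReal.ofReal |Rect.inc f (Sub11.high t Q)| with hydef
  have hsum_low : ∑ Q ∈ P, x Q ^ p ≤ cVarSum p f (Rect.mk a b s t) := by
    simp only [hxdef]
    rw [Sub11.sum_comp_eq hp0 f P (Sub11.low t) hinj_low]
    exact le_trans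
      (Finset.sum_le_sum_of_subset (Finset.image_subset_image (Finset.filter_subset _ _)))
      (Sub11.le_cVarSum (Sub11.isPartition_low hst htu hP))
  have hsum_high : ∑ Q ∈ P, y Q ^ p ≤ cVarSum p f (Rect.mk a b t u) := by
    simp only [hydef]
    rw [Sub11.sum_comp_eq hp0 f P (Sub11.high t) hinj_high]
    exact le_trans
      (Finset.sum_le_sum_of_subset (Finset.image_subset_image (Finset.filter_subset _ _)))
      (Sub11.le_cVarSum (Sub11.isPartition_high hst htu hP))
  have hsum_both : (∑ Q ∈ P, x Q ^ p) + (∑ Q ∈ P, y Q ^ p) ≤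
      cVarSum p f (Rect.mk a b s u) := by
    simp only [hxdef, hydef]
    rw [Sub11.sum_comp_eq hp0 f P (Sub11.low t) hinj_low,
      Sub11.sum_comp_eq hp0 f P (Sub11.high t) hinj_high]
    have hdisLH : Disjoint
        ((P.filter fun Q => Rect.inc f (Sub11.low t Q) ≠ 0).image (Sub11.low t))
        ((P.filter fun Q => Rect.inc f (Sub11.high t Q) ≠ 0).image (Sub11.high t)) := by
      rw [Finset.disjoint_left]
      intro A hA hA'
      obtain ⟨Q, hQ, rfl⟩ := Finset.mem_image.1 hA
      obtain ⟨Q', hQ', he⟩ := Finset.mem_image.1 hA'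
      have h1 := Sub11.strict_of_inc_ne
        (Sub11.low_valid (hP.1 Q (Finset.mem_filter.1 hQ).1)) (Finset.mem_filter.1 hQ).2
      have hdt : (Sub11.low t Q).d ≤ t := min_le_right _ _
      have hct : t ≤ (Sub11.low t Q).c := by
        rw [← he]; exact le_max_right _ _
      exact absurd (lt_of_le_of_lt hct (lt_of_lt_of_le h1.2 hdt)) (lt_irrefl t)
    rw [← Finset.sum_union hdisLH]
    exact le_trans
      (Finset.sum_le_sum_of_subset (Finset.union_subset_union
        (Finset.image_subset_image (Finset.filter_subset _ _))
        (Finset.image_subset_image (Finset.filter_subset _ _))))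
      (Sub11.le_cVarSum (Sub11.isPartition_union hst htu hP))
  have hmaxp : ∑ Q ∈ P, max (x Q) (y Q) ^ p ≤ cVarSum p f (Rect.mk a b s u) := by
    refine le_trans (Finset.sum_le_sum fun Q _ => ?_)
      (le_trans (le_of_eq Finset.sum_add_distrib) hsum_both)
    rcases le_total (x Q) (y Q) with h | h
    · rw [max_eq_right h]; exact le_add_self
    · rw [max_eq_left h]; exact le_self_add
  have hminp : ∑ Q ∈ P, min (x Q) (y Q) ^ p ≤
      min (cVarSum p f (Rect.mk a b s t)) (cVarSum p f (Rect.mk a b t u)) := by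
    refine le_min ?_ ?_
    · exact le_trans (Finset.sum_le_sum fun Q _ =>
        ENNReal.rpow_le_rpow (min_le_left _ _) hp0.le) hsum_low
    · exact le_trans (Finset.sum_le_sum fun Q _ =>
        ENNReal.rpow_le_rpow (min_le_right _ _) hp0.le) hsum_high
  have h1p : (0:ℝ) ≤ 1 - 1 / p := by
    have h2 : 1 / p ≤ 1 := by rw [div_le_one hp0]; exact hp
    linarith
  calc ∑ Q ∈ P, ENNReal.ofReal |Rect.inc f Q| ^ p
      ≤ ∑ Q ∈ P, (x Q ^ p + y Q ^ p +
          ENNReal.ofReal (p * 2 ^ (p - 1)) *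
            (max (x Q) (y Q) ^ (p - 1) * min (x Q) (y Q))) := by
        refine Finset.sum_le_sum fun Q _ => ?_
        simp only [hxdef, hydef]
        exact Sub11.perQ' hp _ _ _ (abs_nonneg _) (abs_nonneg _) (abs_nonneg _)
          (Sub11.scalar_ineq hp (abs_nonneg _) (abs_nonneg _) (abs_nonneg _)
            (by rw [Sub11.inc_split f t Q]; exact abs_add_le _ _))
    _ = (∑ Q ∈ P, x Q ^ p) + (∑ Q ∈ P, y Q ^ p) +
          ENNReal.ofReal (p * 2 ^ (p - 1)) *
            ∑ Q ∈ P, max (x Q) (y Q) ^ (p - 1) * min (x Q) (y Q) := by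
        rw [Finset.sum_add_distrib, Finset.sum_add_distrib, Finset.mul_sum]
    _ ≤ cVarSum p f (Rect.mk a b s t) + cVarSum p f (Rect.mk a b t u) +
          ENNReal.ofReal (p * 2 ^ (p - 1)) *
            (cVarSum p f (Rect.mk a b s u) ^ (1 - 1 / p) *
              (min (cVarSum p f (Rect.mk a b s t)) (cVarSum p f (Rect.mk a b t u))) ^ (1 / p)) := by
        refine add_le_add (add_le_add hsum_low hsum_high) (mul_le_mul_right ?_ _)
        refine le_trans
          (Sub11.holder_aux P (fun Q => max (x Q) (y Q)) (fun Q => min (x Q) (y Q)) hp) ?_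
        exact mul_le_mul' (ENNReal.rpow_le_rpow hmaxp h1p)
          (ENNReal.rpow_le_rpow hminp (one_div_pos.2 hp0).le)
    _ = cVarSum p f (Rect.mk a b s t) + cVarSum p f (Rect.mk a b t u) +
          ENNReal.ofReal (p * 2 ^ (p - 1)) *
            cVarSum p f (Rect.mk a b s u) ^ (1 - 1 / p) *
            (min (cVarSum p f (Rect.mk a b s t)) (cVarSum p f (Rect.mk a b t u))) ^ (1 / p) := by
        rw [mul_assoc]
end

section
/- Let p, q ≥ 1 with θ = 1/p + 1/q > 1, and let x, y : [0,T] → ℝ have finite p- resp. q-variation. For any dissection D = (0 = t_0 < ... < t_n = T) with n ≥ 2, there exists an index i_0 ∈ {1,...,n−1} such that |∫_D y dx − ∫_{D∖{t_{i_0}}} y dx| ≤ (n−1)^{−θ} |x|_{p-var;[0,T]} |y|_{q-var;[0,T]}, where ∫_D y dx := Σ_{i=1}^n y_{t_i} (x_{t_i} − x_{t_{i−1}}). -/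
open Set
open scoped ENNReal NNReal

/-- The 1D `p`-variation of `x` on `[s,t]`, raised to the power `p`: the supremum
over dissections of `Σ_k |x_{u_{k+1}} - x_{u_k}|^p`.  So
`|x|_{p-var;[s,t]} = (var1D p x s t) ^ (1/p)`. -/
noncomputable def var1D (p : ℝ) (x : ℝ → ℝ) (s t : ℝ) : ℝ≥0∞ :=
  ⨆ (n : ℕ) (u : Fin (n + 1) → ℝ) (_ : Monotone u)
    (_ : u 0 = s) (_ : u (Fin.last n) = t),
    ∑ i : Fin n, ENNReal.ofReal |x (u i.succ) - x (u i.castSucc)| ^ p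

/-- The discrete integral `∫_D y dx = Σ_{i=1}^n y_{t_i}(x_{t_i} - x_{t_{i-1}})`
over the dissection `D = (t_0, …, t_n)`. -/
noncomputable def discInt (n : ℕ) (t : Fin (n + 1) → ℝ) (y x : ℝ → ℝ) : ℝ :=
  ∑ i : Fin n, y (t i.succ) * (x (t i.succ) - x (t i.castSucc))

/-- `ζ(s) = Σ_{n≥1} n^{-s}` (Riemann zeta as a real series). -/
noncomputable def zetaSum (s : ℝ) : ℝ := ∑' n : ℕ, ((n : ℝ) + 1) ^ (-s)

lemma key_sum (a b : ℕ → ℝ) (m k : ℕ) (hk : k ≤ m) :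
    (∑ i ∈ Finset.range (m+2), b (i+1) * (a (i+1) - a i))
      - ∑ i ∈ Finset.range (m+1),
          b (if i+1 ≤ k then i+1 else i+2) *
            (a (if i+1 ≤ k then i+1 else i+2) - a (if i ≤ k then i else i+1))
    = (b (k+1) - b (k+2)) * (a (k+1) - a k) := by
  obtain ⟨d, rfl⟩ := Nat.exists_eq_add_of_le hk
  set G : ℕ → ℝ := fun i => b (i+1) * (a (i+1) - a i) with hG
  set F : ℕ → ℝ := fun i =>
    b (if i+1 ≤ k then i+1 else i+2) *
      (a (if i+1 ≤ k then i+1 else i+2) - a (if i ≤ k then i else i+1)) with hF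
  have h1 : ∑ i ∈ Finset.range (k+d+2), G i
      = (∑ i ∈ Finset.range k, G i) + G k + G (k+1) + ∑ i ∈ Finset.range d, G (k+2+i) := by
    rw [show k+d+2 = (k+2)+d by ring, Finset.sum_range_add, Finset.sum_range_succ,
      Finset.sum_range_succ]
  have h2 : ∑ i ∈ Finset.range (k+d+1), F i
      = (∑ i ∈ Finset.range k, F i) + F k + ∑ i ∈ Finset.range d, F (k+1+i) := by
    rw [show k+d+1 = (k+1)+d by ring, Finset.sum_range_add, Finset.sum_range_succ]
  have e1 : ∑ i ∈ Finset.range k, F i = ∑ i ∈ Finset.range k, G i := by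
    refine Finset.sum_congr rfl fun i hi => ?_
    rw [Finset.mem_range] at hi
    simp only [hF, hG, if_pos (by omega : i+1 ≤ k), if_pos (by omega : i ≤ k)]
  have e2 : ∑ i ∈ Finset.range d, F (k+1+i) = ∑ i ∈ Finset.range d, G (k+2+i) := by
    refine Finset.sum_congr rfl fun i _ => ?_
    simp only [hF, hG, if_neg (by omega : ¬ k+1+i+1 ≤ k), if_neg (by omega : ¬ k+1+i ≤ k)]
    rw [show k+1+i+2 = k+2+i+1 by ring, show k+1+i+1 = k+2+i by ring]
  have e3 : F k = b (k+2) * (a (k+2) - a k) := by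
    simp only [hF, if_neg (by omega : ¬ k+1 ≤ k), if_pos (le_refl k)]
  rw [h1, h2, e1, e2, e3]
  simp only [hG]
  ring


/-- one-point removal estimate for discrete Young integrals.  For a
dissection `0 = t_0 < … < t_n = T` with `n = m+2 ≥ 2` intervals there is an interior
point whose removal changes `∫_D y dx` by at most
`(n-1)^{-θ} |x|_{p-var} |y|_{q-var}`, `θ = 1/p + 1/q > 1`. -/
theorem young_point_removal (p q T : ℝ) (hp : 1 ≤ p) (hq : 1 ≤ q)
    (hθ : 1 < 1 / p + 1 / q) (hT : 0 < T) (x y : ℝ → ℝ)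
    (hx : var1D p x 0 T ≠ ⊤) (hy : var1D q y 0 T ≠ ⊤)
    (m : ℕ) (t : Fin (m + 3) → ℝ) (ht : StrictMono t)
    (h0 : t 0 = 0) (hlast : t (Fin.last (m + 2)) = T) :
    ∃ i₀ : Fin (m + 3), i₀ ≠ 0 ∧ i₀ ≠ Fin.last (m + 2) ∧
      ENNReal.ofReal
          |discInt (m + 2) t y x - discInt (m + 1) (fun j => t (i₀.succAbove j)) y x| ≤
        ((m + 1 : ℝ≥0∞))⁻¹ ^ (1 / p + 1 / q) *
          var1D p x 0 T ^ (1 / p) * var1D q y 0 T ^ (1 / q) := by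
  have hp0 : (0:ℝ) < p := lt_of_lt_of_le one_pos hp
  have hq0 : (0:ℝ) < q := lt_of_lt_of_le one_pos hq
  set θ : ℝ := 1/p + 1/q with hθdef
  have hθ1 : (1:ℝ) < θ := hθ
  have hθ0 : (0:ℝ) < θ := by linarith
  -- ℕ-indexed dissection
  set t' : ℕ → ℝ := fun i => t ⟨min i (m+2), by omega⟩ with ht'def
  have ht'v : ∀ v : Fin (m+3), t' (v : ℕ) = t v := by
    intro v
    simp only [ht'def]
    congr 1
    ext
    simp only
    omega
  set A : ℕ → ℝ := fun i => x (t' i) with hA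
  set B : ℕ → ℝ := fun i => y (t' i) with hB
  set f : ℕ → ℝ≥0∞ := fun i => ENNReal.ofReal |A (i+1) - A i| with hf
  set g : ℕ → ℝ≥0∞ := fun i => ENNReal.ofReal |B (i+2) - B (i+1)| with hg
  have hterm : ∀ i : Fin (m+2), t i.succ = t' ((i : ℕ)+1) ∧ t i.castSucc = t' (i : ℕ) := by
    intro i
    constructor
    · rw [show ((i : ℕ)+1) = ((i.succ : Fin (m+3)) : ℕ) from (Fin.val_succ i).symm, ht'v]
    · rw [show ((i : ℕ)) = ((i.castSucc : Fin (m+3)) : ℕ) from (Fin.coe_castSucc i).symm, ht'v]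
  -- x-variation bound
  have hxsum : ∑ i ∈ Finset.range (m+1), f i ^ p ≤ var1D p x 0 T := by
    have h1 : ∑ i : Fin (m+2), ENNReal.ofReal |x (t i.succ) - x (t i.castSucc)| ^ p
        = ∑ i ∈ Finset.range (m+2), f i ^ p := by
      rw [← Fin.sum_univ_eq_sum_range (fun i => f i ^ p) (m+2)]
      refine Finset.sum_congr rfl fun i _ => ?_
      rw [(hterm i).1, (hterm i).2]
    have h2 : ∑ i : Fin (m+2), ENNReal.ofReal |x (t i.succ) - x (t i.castSucc)| ^ p
        ≤ var1D p x 0 T := by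
      rw [var1D]
      exact le_iSup_of_le (m+2) (le_iSup_of_le t (le_iSup_of_le ht.monotone
        (le_iSup_of_le h0 (le_iSup_of_le hlast le_rfl))))
    refine le_trans ?_ (h1 ▸ h2)
    exact Finset.sum_le_sum_of_subset (Finset.range_subset_range.mpr (by omega))
  -- y-variation bound
  have hysum : ∑ i ∈ Finset.range (m+1), g i ^ q ≤ var1D q y 0 T := by
    have h1 : ∑ i : Fin (m+2), ENNReal.ofReal |y (t i.succ) - y (t i.castSucc)| ^ q
        = ∑ i ∈ Finset.range (m+2), ENNReal.ofReal |B (i+1) - B i| ^ q := by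
      rw [← Fin.sum_univ_eq_sum_range (fun i => ENNReal.ofReal |B (i+1) - B i| ^ q) (m+2)]
      refine Finset.sum_congr rfl fun i _ => ?_
      rw [(hterm i).1, (hterm i).2]
    have h2 : ∑ i : Fin (m+2), ENNReal.ofReal |y (t i.succ) - y (t i.castSucc)| ^ q
        ≤ var1D q y 0 T := by
      rw [var1D]
      exact le_iSup_of_le (m+2) (le_iSup_of_le t (le_iSup_of_le ht.monotone
        (le_iSup_of_le h0 (le_iSup_of_le hlast le_rfl))))
    have h3 : ∑ i ∈ Finset.range (m+1), g i ^ q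
        ≤ ∑ i ∈ Finset.range (m+2), ENNReal.ofReal |B (i+1) - B i| ^ q := by
      rw [Finset.sum_range_succ' (fun i => ENNReal.ofReal |B (i+1) - B i| ^ q) (m+1)]
      exact le_add_of_le_of_nonneg (le_of_eq (Finset.sum_congr rfl fun i _ => rfl)) zero_le
    exact h3.trans (h1 ▸ h2)
  -- Hölder
  set P : ℝ := p * θ with hPdef
  set Q : ℝ := q * θ with hQdef
  have hPQ : P.HolderConjugate Q := by
    rw [Real.holderConjugate_iff]
    constructor
    · rw [hPdef]
      nlinarith [mul_nonneg (sub_nonneg.mpr hp) hθ0.le]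
    · rw [hPdef, hQdef, hθdef]
      field_simp
  have hfp : ∀ i : ℕ, (f i ^ (1/θ)) ^ P = f i ^ p := by
    intro i
    rw [← ENNReal.rpow_mul]
    congr 1
    rw [hPdef]
    field_simp
  have hgq : ∀ i : ℕ, (g i ^ (1/θ)) ^ Q = g i ^ q := by
    intro i
    rw [← ENNReal.rpow_mul]
    congr 1
    rw [hQdef]
    field_simp
  have holder := ENNReal.inner_le_Lp_mul_Lq (Finset.range (m+1))
    (fun i => f i ^ (1/θ)) (fun i => g i ^ (1/θ)) hPQ
  rw [Finset.sum_congr rfl (fun i _ => hfp i), Finset.sum_congr rfl (fun i _ => hgq i)]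
    at holder
  have hS : ∑ i ∈ Finset.range (m+1), f i ^ (1/θ) * g i ^ (1/θ)
      ≤ (var1D p x 0 T) ^ (1/P) * (var1D q y 0 T) ^ (1/Q) :=
    holder.trans (mul_le_mul'
      (ENNReal.rpow_le_rpow hxsum (by positivity))
      (ENNReal.rpow_le_rpow hysum (by positivity)))
  -- the increments
  set Δ : ℕ → ℝ≥0∞ := fun i => ENNReal.ofReal |(B (i+1) - B (i+2)) * (A (i+1) - A i)|
    with hΔdef
  have hΔ : ∀ i, Δ i = f i * g i := by
    intro i
    rw [hΔdef]
    simp only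
    rw [abs_mul, ENNReal.ofReal_mul (abs_nonneg _), abs_sub_comm (B (i+1)), mul_comm]
  have hΔθ : ∀ i, Δ i ^ (1/θ) = f i ^ (1/θ) * g i ^ (1/θ) := by
    intro i
    rw [hΔ, ENNReal.mul_rpow_of_nonneg _ _ (by positivity)]
  -- choose the minimum
  obtain ⟨k, hkmem, hkmin⟩ := Finset.exists_min_image (Finset.range (m+1))
    (fun i => Δ i ^ (1/θ)) ⟨0, by simp⟩
  have hkm : k < m + 1 := Finset.mem_range.mp hkmem
  have hcmul : ((m:ℝ≥0∞) + 1) * (Δ k ^ (1/θ))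
      ≤ (var1D p x 0 T) ^ (1/P) * (var1D q y 0 T) ^ (1/Q) := by
    calc ((m:ℝ≥0∞) + 1) * (Δ k ^ (1/θ))
        = ∑ _i ∈ Finset.range (m+1), Δ k ^ (1/θ) := by
          rw [Finset.sum_const, Finset.card_range, nsmul_eq_mul]
          push_cast
          ring
      _ ≤ ∑ i ∈ Finset.range (m+1), Δ i ^ (1/θ) :=
          Finset.sum_le_sum fun i hi => hkmin i hi
      _ = ∑ i ∈ Finset.range (m+1), f i ^ (1/θ) * g i ^ (1/θ) :=
          Finset.sum_congr rfl fun i _ => hΔθ i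
      _ ≤ _ := hS
  have hc0 : ((m:ℝ≥0∞) + 1) ≠ 0 := by simp
  have hct : ((m:ℝ≥0∞) + 1) ≠ ⊤ := by
    simp [ENNReal.add_ne_top]
  have hmin : Δ k ^ (1/θ)
      ≤ ((m:ℝ≥0∞) + 1)⁻¹ * ((var1D p x 0 T) ^ (1/P) * (var1D q y 0 T) ^ (1/Q)) := by
    have := mul_le_mul_right hcmul (((m:ℝ≥0∞) + 1)⁻¹)
    rwa [← mul_assoc, ENNReal.inv_mul_cancel hc0 hct, one_mul] at this
  -- raise to θ
  have hbound : Δ k ≤ ((m:ℝ≥0∞) + 1)⁻¹ ^ θ *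
      (var1D p x 0 T) ^ (1/p) * (var1D q y 0 T) ^ (1/q) := by
    have h1 : Δ k = (Δ k ^ (1/θ)) ^ θ := by
      rw [← ENNReal.rpow_mul, one_div, inv_mul_cancel₀ hθ0.ne', ENNReal.rpow_one]
    rw [h1]
    refine le_trans (ENNReal.rpow_le_rpow hmin hθ0.le) (le_of_eq ?_)
    rw [ENNReal.mul_rpow_of_nonneg _ _ hθ0.le, ENNReal.mul_rpow_of_nonneg _ _ hθ0.le,
      ← ENNReal.rpow_mul, ← ENNReal.rpow_mul]
    rw [show 1/P * θ = 1/p by rw [hPdef]; field_simp,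
      show 1/Q * θ = 1/q by rw [hQdef]; field_simp]
    ring
  -- the chosen index
  refine ⟨⟨k+1, by omega⟩, Fin.ne_of_val_ne (by simp), Fin.ne_of_val_ne (by simp; omega), ?_⟩
  set i₀ : Fin (m+3) := ⟨k+1, by omega⟩ with hi₀
  -- succAbove description
  have hsA : ∀ j : Fin (m+2), ((i₀.succAbove j : Fin (m+3)) : ℕ)
      = if (j:ℕ) ≤ k then (j:ℕ) else (j:ℕ)+1 := by
    intro j
    by_cases hc : (j:ℕ) ≤ k
    · have hlt : j.castSucc < i₀ := by
        rw [Fin.lt_def]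
        simp only [Fin.coe_castSucc, hi₀]
        omega
      rw [Fin.succAbove_of_castSucc_lt _ _ hlt, if_pos hc, Fin.coe_castSucc]
    · have hle : i₀ ≤ j.castSucc := by
        rw [Fin.le_def]
        simp only [Fin.coe_castSucc, hi₀]
        omega
      rw [Fin.succAbove_of_le_castSucc _ _ hle, if_neg hc, Fin.val_succ]
  have hvt : ∀ j : Fin (m+2),
      t (i₀.succAbove j) = t' (if (j:ℕ) ≤ k then (j:ℕ) else (j:ℕ)+1) := by
    intro j
    rw [← hsA j, ht'v]
  -- the difference identity
  have hd1 : discInt (m+2) t y x = ∑ i ∈ Finset.range (m+2), B (i+1) * (A (i+1) - A i) := by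
    rw [discInt, ← Fin.sum_univ_eq_sum_range (fun i => B (i+1) * (A (i+1) - A i)) (m+2)]
    refine Finset.sum_congr rfl fun i _ => ?_
    rw [(hterm i).1, (hterm i).2]
  have hd2 : discInt (m+1) (fun j => t (i₀.succAbove j)) y x
      = ∑ i ∈ Finset.range (m+1),
          B (if i+1 ≤ k then i+1 else i+2) *
            (A (if i+1 ≤ k then i+1 else i+2) - A (if i ≤ k then i else i+1)) := by
    rw [discInt, ← Fin.sum_univ_eq_sum_range (fun i =>
      B (if i+1 ≤ k then i+1 else i+2) *
        (A (if i+1 ≤ k then i+1 else i+2) - A (if i ≤ k then i else i+1))) (m+1)]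
    refine Finset.sum_congr rfl fun j _ => ?_
    have e1 := hvt j.succ
    have e2 := hvt j.castSucc
    rw [Fin.val_succ] at e1
    rw [Fin.coe_castSucc] at e2
    simp only [e1, e2]
    rfl
  have hdiff : discInt (m+2) t y x - discInt (m+1) (fun j => t (i₀.succAbove j)) y x
      = (B (k+1) - B (k+2)) * (A (k+1) - A k) := by
    rw [hd1, hd2]
    exact key_sum A B m k (by omega)
  rw [hdiff]
  exact hbound
end

section
/- (Young's maximal inequality, discrete form) Let p, q ≥ 1 with θ = 1/p + 1/q > 1 and x, y : [0,T] → ℝ of finite p- resp. q-variation with y_0 = 0. Then for every dissection D of [0,T], |Σ_{i=1}^n y_{t_i}(x_{t_i} − x_{t_{i−1}})| ≤ (1 + ζ(θ)) |x|_{p-var;[0,T]} |y|_{q-var;[0,T]}, where ζ is the Riemann zeta function. -/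
open Set
open scoped ENNReal NNReal

/-- Any partial sum of `p`-powers of increments along a monotone dissection is
bounded by the (finite) `p`-variation. -/
lemma sum_abs_rpow_le_var1D (p : ℝ) (hp : 0 ≤ p) (x : ℝ → ℝ) (s t : ℝ)
    (hfin : var1D p x s t ≠ ⊤)
    (m : ℕ) (f : ℕ → ℝ) (hf : Monotone f) (h0 : f 0 = s) (hm : f m = t)
    (S : Finset ℕ) (hS : S ⊆ Finset.range m) :
    ∑ i ∈ S, |x (f (i + 1)) - x (f i)| ^ p ≤ (var1D p x s t).toReal := by
  set u : Fin (m + 1) → ℝ := fun i => f i with hu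
  have humono : Monotone u := fun i j hij => hf (by exact_mod_cast hij)
  have key : ENNReal.ofReal (∑ i ∈ S, |x (f (i + 1)) - x (f i)| ^ p) ≤ var1D p x s t := by
    rw [ENNReal.ofReal_sum_of_nonneg (fun i _ => by positivity)]
    calc ∑ i ∈ S, ENNReal.ofReal (|x (f (i + 1)) - x (f i)| ^ p)
        = ∑ i ∈ S, ENNReal.ofReal |x (f (i + 1)) - x (f i)| ^ p := by
          refine Finset.sum_congr rfl fun i _ => ?_
          exact (ENNReal.ofReal_rpow_of_nonneg (abs_nonneg _) hp).symm
      _ ≤ ∑ i ∈ Finset.range m, ENNReal.ofReal |x (f (i + 1)) - x (f i)| ^ p :=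
          Finset.sum_le_sum_of_subset hS
      _ = ∑ i : Fin m, ENNReal.ofReal |x (u i.succ) - x (u i.castSucc)| ^ p := by
          rw [← Fin.sum_univ_eq_sum_range]
          refine Finset.sum_congr rfl fun i _ => ?_
          simp [hu, Fin.val_succ, Fin.coe_castSucc]
      _ ≤ var1D p x s t := by
          refine le_iSup_of_le m (le_iSup_of_le u (le_iSup_of_le humono ?_))
          refine le_iSup_of_le (by simp [hu, h0]) (le_iSup_of_le (by simp [hu, hm]) le_rfl)
  have := ENNReal.toReal_mono hfin key
  rwa [ENNReal.toReal_ofReal (Finset.sum_nonneg fun i _ => by positivity)] at this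

/-- Removing one interior point from a dissection changes a telescoping-type
sum by an explicit three-term correction. -/
lemma sum_remove_point (F : ℝ → ℝ → ℝ) (f g : ℕ → ℝ) (m j : ℕ) (hj : j + 1 ≤ m)
    (hg : ∀ i, g i = if i ≤ j then f i else f (i + 1)) :
    ∑ i ∈ Finset.range m, F (g i) (g (i + 1)) =
      ∑ i ∈ Finset.range (m + 1), F (f i) (f (i + 1))
        - F (f j) (f (j + 1)) - F (f (j + 1)) (f (j + 2)) + F (f j) (f (j + 2)) := by
  have hgl : ∀ i, i ≤ j → g i = f i := fun i hi => by rw [hg]; exact if_pos hi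
  have hgu : ∀ i, j < i → g i = f (i + 1) := fun i hi => by
    rw [hg]; exact if_neg (by omega)
  have hL : ∑ i ∈ Finset.range m, F (g i) (g (i + 1))
      = (∑ i ∈ Finset.Ico 0 j, F (f i) (f (i + 1)))
        + (F (f j) (f (j + 2)) + ∑ i ∈ Finset.Ico (j + 2) (m + 1), F (f i) (f (i + 1))) := by
    rw [Finset.range_eq_Ico, ← Finset.sum_Ico_consecutive _ (Nat.zero_le j) (by omega : j ≤ m),
      Finset.sum_eq_sum_Ico_succ_bot (by omega : j < m)]
    congr 1
    · refine Finset.sum_congr rfl fun i hi => ?_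
      have hi' := Finset.mem_Ico.1 hi
      rw [hgl i (by omega), hgl (i + 1) (by omega)]
    · congr 1
      · rw [hgl j le_rfl, hgu (j + 1) (by omega)]
      · rw [show j + 2 = (j + 1) + 1 from rfl, show m + 1 = m + 1 from rfl,
          ← Finset.sum_Ico_add' (fun i => F (f i) (f (i + 1))) (j + 1) m 1]
        refine Finset.sum_congr rfl fun i hi => ?_
        have hi' := Finset.mem_Ico.1 hi
        rw [hgu i (by omega), hgu (i + 1) (by omega)]
  have hR : ∑ i ∈ Finset.range (m + 1), F (f i) (f (i + 1))
      = (∑ i ∈ Finset.Ico 0 j, F (f i) (f (i + 1)))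
        + (F (f j) (f (j + 1)) + (F (f (j + 1)) (f (j + 2))
          + ∑ i ∈ Finset.Ico (j + 2) (m + 1), F (f i) (f (i + 1)))) := by
    rw [Finset.range_eq_Ico,
      ← Finset.sum_Ico_consecutive _ (Nat.zero_le j) (by omega : j ≤ m + 1),
      Finset.sum_eq_sum_Ico_succ_bot (by omega : j < m + 1),
      Finset.sum_eq_sum_Ico_succ_bot (by omega : j + 1 < m + 1)]
  rw [hL, hR]; ring

/-- Hölder/pigeonhole: some index has a small product of increments. -/
lemma exists_small_product (p q VX VY : ℝ) (hp : 1 ≤ p) (hq : 1 ≤ q)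
    (m : ℕ) (hm : 0 < m) (a b : ℕ → ℝ) (ha : ∀ i, 0 ≤ a i) (hb : ∀ i, 0 ≤ b i)
    (hVX : 0 ≤ VX) (hVY : 0 ≤ VY)
    (hVa : ∑ i ∈ Finset.range m, a i ^ p ≤ VX)
    (hVb : ∑ i ∈ Finset.range m, b i ^ q ≤ VY) :
    ∃ j ∈ Finset.range m,
      a j * b j ≤ (m : ℝ) ^ (-(1 / p + 1 / q)) * (VX ^ (1 / p) * VY ^ (1 / q)) := by
  set θ : ℝ := 1 / p + 1 / q with hθdef
  have hp0 : 0 < p := lt_of_lt_of_le one_pos hp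
  have hq0 : 0 < q := lt_of_lt_of_le one_pos hq
  have hθ0 : 0 < θ := by positivity
  have hm0 : (0 : ℝ) < (m : ℝ) := by exact_mod_cast hm
  have hθne : θ ≠ 0 := ne_of_gt hθ0
  have e1 : 1 / θ * (p * θ) = p := by field_simp
  have e2 : 1 / θ * (q * θ) = q := by field_simp
  have e3 : 1 / (p * θ) * θ = 1 / p := by
    rw [one_div, one_div, mul_inv]
    rw [mul_assoc, inv_mul_cancel₀ hθne, mul_one]
  have e4 : 1 / (q * θ) * θ = 1 / q := by
    rw [one_div, one_div, mul_inv]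
    rw [mul_assoc, inv_mul_cancel₀ hθne, mul_one]
  obtain ⟨j, hj, hmin⟩ := Finset.exists_min_image (Finset.range m)
    (fun i => (a i * b i) ^ (1 / θ)) ⟨0, Finset.mem_range.2 hm⟩
  refine ⟨j, hj, ?_⟩
  -- conjugate exponents p*θ and q*θ
  have hpθ : p * θ = 1 + p / q := by
    rw [hθdef]; field_simp
  have hconj : (p * θ).HolderConjugate (q * θ) := by
    rw [Real.holderConjugate_iff]; constructor
    · rw [hpθ]; have : 0 < p / q := by positivity
      linarith
    · have h1 : (p * θ)⁻¹ + (q * θ)⁻¹ = (p⁻¹ + q⁻¹) * θ⁻¹ := by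
        rw [mul_inv, mul_inv]; ring
      have h2 : p⁻¹ + q⁻¹ = θ := by rw [hθdef, one_div, one_div]
      rw [h1, h2, mul_inv_cancel₀ hθ0.ne']
  -- pigeonhole
  have hcard : (m : ℝ) * (a j * b j) ^ (1 / θ) ≤
      ∑ i ∈ Finset.range m, (a i * b i) ^ (1 / θ) := by
    calc (m : ℝ) * (a j * b j) ^ (1 / θ)
        = ∑ _i ∈ Finset.range m, (a j * b j) ^ (1 / θ) := by
          rw [Finset.sum_const, Finset.card_range, nsmul_eq_mul]
      _ ≤ _ := Finset.sum_le_sum hmin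
  -- Hölder
  have hhold : ∑ i ∈ Finset.range m, (a i * b i) ^ (1 / θ) ≤
      VX ^ (1 / (p * θ)) * VY ^ (1 / (q * θ)) := by
    have h1 : ∑ i ∈ Finset.range m, (a i * b i) ^ (1 / θ)
        = ∑ i ∈ Finset.range m, (a i ^ (1 / θ)) * (b i ^ (1 / θ)) := by
      refine Finset.sum_congr rfl fun i _ => ?_
      exact Real.mul_rpow (ha i) (hb i)
    rw [h1]
    calc ∑ i ∈ Finset.range m, (a i ^ (1 / θ)) * (b i ^ (1 / θ))
        ≤ (∑ i ∈ Finset.range m, (a i ^ (1 / θ)) ^ (p * θ)) ^ (1 / (p * θ)) *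
            (∑ i ∈ Finset.range m, (b i ^ (1 / θ)) ^ (q * θ)) ^ (1 / (q * θ)) :=
          Real.inner_le_Lp_mul_Lq_of_nonneg _ hconj
            (fun i _ => Real.rpow_nonneg (ha i) _)
            (fun i _ => Real.rpow_nonneg (hb i) _)
      _ = (∑ i ∈ Finset.range m, a i ^ p) ^ (1 / (p * θ)) *
            (∑ i ∈ Finset.range m, b i ^ q) ^ (1 / (q * θ)) := by
          congr 1
          · congr 1; refine Finset.sum_congr rfl fun i _ => ?_
            rw [← Real.rpow_mul (ha i), e1]
          · congr 1; refine Finset.sum_congr rfl fun i _ => ?_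
            rw [← Real.rpow_mul (hb i), e2]
      _ ≤ VX ^ (1 / (p * θ)) * VY ^ (1 / (q * θ)) := by
          have h2 : (0:ℝ) ≤ ∑ i ∈ Finset.range m, a i ^ p :=
            Finset.sum_nonneg fun i _ => Real.rpow_nonneg (ha i) _
          have h3 : (0:ℝ) ≤ ∑ i ∈ Finset.range m, b i ^ q :=
            Finset.sum_nonneg fun i _ => Real.rpow_nonneg (hb i) _
          exact mul_le_mul (Real.rpow_le_rpow h2 hVa (by positivity))
            (Real.rpow_le_rpow h3 hVb (by positivity))
            (Real.rpow_nonneg h3 _) (Real.rpow_nonneg hVX _)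
  have hab : 0 ≤ a j * b j := mul_nonneg (ha j) (hb j)
  have hstep : (a j * b j) ^ (1 / θ) ≤
      VX ^ (1 / (p * θ)) * VY ^ (1 / (q * θ)) / (m : ℝ) :=
    (le_div_iff₀' hm0).mpr (hcard.trans hhold)
  have hrepr : a j * b j = ((a j * b j) ^ (1 / θ)) ^ θ := by
    rw [← Real.rpow_mul hab, one_div, inv_mul_cancel₀ hθ0.ne', Real.rpow_one]
  have hXnn : (0:ℝ) ≤ VX ^ (1 / (p * θ)) := Real.rpow_nonneg hVX _
  have hYnn : (0:ℝ) ≤ VY ^ (1 / (q * θ)) := Real.rpow_nonneg hVY _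
  have hfinal : (VX ^ (1 / (p * θ)) * VY ^ (1 / (q * θ)) / (m : ℝ)) ^ θ
      = (m : ℝ) ^ (-θ) * (VX ^ (1 / p) * VY ^ (1 / q)) := by
    rw [Real.div_rpow (mul_nonneg hXnn hYnn) hm0.le,
      Real.mul_rpow hXnn hYnn, ← Real.rpow_mul hVX, ← Real.rpow_mul hVY,
      Real.rpow_neg hm0.le,
      e3, e4, div_eq_mul_inv]
    ring
  calc a j * b j = ((a j * b j) ^ (1 / θ)) ^ θ := hrepr
    _ ≤ (VX ^ (1 / (p * θ)) * VY ^ (1 / (q * θ)) / (m : ℝ)) ^ θ :=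
        Real.rpow_le_rpow (Real.rpow_nonneg hab _) hstep hθ0.le
    _ = (m : ℝ) ^ (-θ) * (VX ^ (1 / p) * VY ^ (1 / q)) := hfinal

/-- Young's maximal inequality, discrete form: for `θ = 1/p + 1/q > 1`
and `y_0 = 0`, every discrete integral over a dissection of `[0,T]` satisfies
`|∫_D y dx| ≤ (1 + ζ(θ)) |x|_{p-var} |y|_{q-var}`. -/
theorem young_maximal_inequality (p q T : ℝ) (hp : 1 ≤ p) (hq : 1 ≤ q)
    (hθ : 1 < 1 / p + 1 / q) (hT : 0 < T) (x y : ℝ → ℝ)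
    (hx : var1D p x 0 T ≠ ⊤) (hy : var1D q y 0 T ≠ ⊤) (hy0 : y 0 = 0)
    (n : ℕ) (t : Fin (n + 1) → ℝ) (ht : Monotone t)
    (h0 : t 0 = 0) (hlast : t (Fin.last n) = T) :
    ENNReal.ofReal |discInt n t y x| ≤
      ENNReal.ofReal (1 + zetaSum (1 / p + 1 / q)) *
        var1D p x 0 T ^ (1 / p) * var1D q y 0 T ^ (1 / q) := by
  set θ : ℝ := 1 / p + 1 / q with hθdef
  have hp0 : 0 < p := lt_of_lt_of_le one_pos hp
  have hq0 : 0 < q := lt_of_lt_of_le one_pos hq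
  have hθ0 : 0 < θ := by positivity
  set VX : ℝ := (var1D p x 0 T).toReal with hVXdef
  set VY : ℝ := (var1D q y 0 T).toReal with hVYdef
  have hVX : 0 ≤ VX := ENNReal.toReal_nonneg
  have hVY : 0 ≤ VY := ENNReal.toReal_nonneg
  set X : ℝ := VX ^ (1 / p) with hXdef
  set Y : ℝ := VY ^ (1 / q) with hYdef
  have hX0 : 0 ≤ X := Real.rpow_nonneg hVX _
  have hY0 : 0 ≤ Y := Real.rpow_nonneg hVY _
  have hXY : 0 ≤ X * Y := mul_nonneg hX0 hY0
  -- the key bound, proved by strong induction on the number of intervals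
  have key : ∀ N : ℕ, ∀ f : ℕ → ℝ, Monotone f → f 0 = 0 → f N = T →
      |∑ i ∈ Finset.range N, y (f (i + 1)) * (x (f (i + 1)) - x (f i))| ≤
        (1 + ∑ k ∈ Finset.range (N - 1), ((k : ℝ) + 1) ^ (-θ)) * (X * Y) := by
    intro N
    induction N using Nat.strong_induction_on with
    | _ N IH =>
      intro f hf hf0 hfN
      obtain _ | _ | k := N
      · exfalso; rw [hf0] at hfN; linarith
      · -- one single interval
        rw [Finset.sum_range_one]
        have hxb : |x (f 1) - x (f 0)| ≤ X := by
          have h := sum_abs_rpow_le_var1D p (by linarith) x 0 T hx 1 f hf hf0 hfN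
            (Finset.range 1) subset_rfl
          rw [Finset.sum_range_one] at h
          calc |x (f 1) - x (f 0)| = (|x (f 1) - x (f 0)| ^ p) ^ (1 / p) := by
                rw [← Real.rpow_mul (abs_nonneg _), mul_one_div, div_self hp0.ne',
                  Real.rpow_one]
            _ ≤ VX ^ (1 / p) := Real.rpow_le_rpow (by positivity) h (by positivity)
        have hyb : |y (f 1) - y (f 0)| ≤ Y := by
          have h := sum_abs_rpow_le_var1D q (by linarith) y 0 T hy 1 f hf hf0 hfN
            (Finset.range 1) subset_rfl
          rw [Finset.sum_range_one] at h
          calc |y (f 1) - y (f 0)| = (|y (f 1) - y (f 0)| ^ q) ^ (1 / q) := by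
                rw [← Real.rpow_mul (abs_nonneg _), mul_one_div, div_self hq0.ne',
                  Real.rpow_one]
            _ ≤ VY ^ (1 / q) := Real.rpow_le_rpow (by positivity) h (by positivity)
        have hsum0 : ∑ k ∈ Finset.range (1 - 1), ((k : ℝ) + 1) ^ (-θ) = 0 := by simp
        calc |y (f 1) * (x (f 1) - x (f 0))|
            = |y (f 1) - y (f 0)| * |x (f 1) - x (f 0)| := by
              rw [abs_mul, hf0, hy0, sub_zero]
          _ ≤ Y * X := mul_le_mul hyb hxb (abs_nonneg _) hY0
          _ = X * Y := mul_comm Y X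
          _ ≤ (1 + ∑ k ∈ Finset.range (1 - 1), ((k : ℝ) + 1) ^ (-θ)) * (X * Y) := by
              rw [hsum0]; linarith
      · -- at least two intervals: remove one interior point
        have hVa : ∑ i ∈ Finset.range (k + 1), |x (f (i + 1)) - x (f i)| ^ p ≤ VX :=
          sum_abs_rpow_le_var1D p (by linarith) x 0 T hx (k + 2) f hf hf0 hfN
            (Finset.range (k + 1)) (Finset.range_subset_range.2 (by omega))
        have hVb : ∑ i ∈ Finset.range (k + 1), |y (f (i + 2)) - y (f (i + 1))| ^ q ≤ VY := by
          have h := sum_abs_rpow_le_var1D q (by linarith) y 0 T hy (k + 2) f hf hf0 hfN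
            (Finset.Ico 1 (k + 2))
            (by rw [Finset.range_eq_Ico]; exact Finset.Ico_subset_Ico (by omega) le_rfl)
          rw [Finset.sum_Ico_eq_sum_range] at h
          refine le_trans (le_of_eq ?_) h
          refine Finset.sum_congr (by norm_num) fun i _ => ?_
          rw [show 1 + i + 1 = i + 2 by omega, show 1 + i = i + 1 by omega]
        obtain ⟨j, hj, hjmin⟩ := exists_small_product p q VX VY hp hq (k + 1)
          (Nat.succ_pos k) (fun i => |x (f (i + 1)) - x (f i)|)
          (fun i => |y (f (i + 2)) - y (f (i + 1))|)
          (fun i => abs_nonneg _) (fun i => abs_nonneg _) hVX hVY hVa hVb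
        rw [← hθdef] at hjmin
        have hjk : j ≤ k := by have := Finset.mem_range.1 hj; omega
        set g : ℕ → ℝ := fun i => if i ≤ j then f i else f (i + 1) with hgdef
        have hgmono : Monotone g := by
          intro i i' hii'
          simp only [hgdef]
          split <;> split <;> apply hf <;> omega
        have hg0 : g 0 = 0 := by
          simp only [hgdef]; rw [if_pos (Nat.zero_le j)]; exact hf0
        have hgN : g (k + 1) = T := by
          simp only [hgdef]; rw [if_neg (by omega)]; exact hfN
        have hIH := IH (k + 1) (by omega) g hgmono hg0 hgN
        have hrem := sum_remove_point (fun u v => y v * (x v - x u)) f g (k + 1) j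
          (by omega) (fun i => rfl)
        have hsum : ∑ i ∈ Finset.range (k + 2), y (f (i + 1)) * (x (f (i + 1)) - x (f i))
            = (∑ i ∈ Finset.range (k + 1), y (g (i + 1)) * (x (g (i + 1)) - x (g i)))
              + (y (f (j + 1)) - y (f (j + 2))) * (x (f (j + 1)) - x (f j)) := by
          rw [show k + 1 + 1 = k + 2 by omega] at hrem
          try simp only at hrem
          linear_combination -hrem
        have hE : |(y (f (j + 1)) - y (f (j + 2))) * (x (f (j + 1)) - x (f j))|
            ≤ ((k + 1 : ℕ) : ℝ) ^ (-θ) * (X * Y) := by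
          rw [abs_mul, abs_sub_comm (y (f (j + 1))) (y (f (j + 2))), mul_comm]
          exact hjmin
        calc |∑ i ∈ Finset.range (k + 2), y (f (i + 1)) * (x (f (i + 1)) - x (f i))|
            ≤ |∑ i ∈ Finset.range (k + 1), y (g (i + 1)) * (x (g (i + 1)) - x (g i))|
              + |(y (f (j + 1)) - y (f (j + 2))) * (x (f (j + 1)) - x (f j))| := by
              rw [hsum]; exact abs_add_le _ _
          _ ≤ (1 + ∑ k' ∈ Finset.range (k + 1 - 1), ((k' : ℝ) + 1) ^ (-θ)) * (X * Y)
              + ((k + 1 : ℕ) : ℝ) ^ (-θ) * (X * Y) := add_le_add hIH hE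
          _ = (1 + ∑ k' ∈ Finset.range (k + 2 - 1), ((k' : ℝ) + 1) ^ (-θ)) * (X * Y) := by
              have : k + 2 - 1 = (k + 1 - 1) + 1 := by omega
              rw [this, Finset.sum_range_succ]
              have : ((k + 1 - 1 : ℕ) : ℝ) + 1 = ((k + 1 : ℕ) : ℝ) := by
                push_cast [Nat.add_sub_cancel]; ring
              rw [this]; ring
  -- instantiate the key bound with the given dissection
  set f : ℕ → ℝ := fun i => t ⟨min i n, by omega⟩ with hfdef
  have hfm : Monotone f := fun i i' h => ht (Fin.mk_le_mk.2 (by omega))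
  have hf0 : f 0 = 0 := by
    have : (⟨min 0 n, by omega⟩ : Fin (n + 1)) = 0 := by ext; simp
    simp only [hfdef]; rw [this]; exact h0
  have hfn : f n = T := by
    have : (⟨min n n, by omega⟩ : Fin (n + 1)) = Fin.last n := by ext; simp
    simp only [hfdef]; rw [this]; exact hlast
  have hdisc : discInt n t y x
      = ∑ i ∈ Finset.range n, y (f (i + 1)) * (x (f (i + 1)) - x (f i)) := by
    rw [discInt, ← Fin.sum_univ_eq_sum_range
      (fun i => y (f (i + 1)) * (x (f (i + 1)) - x (f i))) n]
    refine Finset.sum_congr rfl fun i _ => ?_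
    have h1 : f (↑i + 1) = t i.succ := by
      simp only [hfdef]
      congr 1
      ext
      simp [Nat.min_eq_left (by omega : (i : ℕ) + 1 ≤ n)]
    have h2 : f ↑i = t i.castSucc := by
      simp only [hfdef]
      congr 1
      ext
      simp [Nat.min_eq_left (by omega : (i : ℕ) ≤ n)]
    rw [h1, h2]
  have hkey := key n f hfm hf0 hfn
  have hzsum : Summable (fun k : ℕ => ((k : ℝ) + 1) ^ (-θ)) := by
    have h1 : Summable (fun k : ℕ => ((k : ℝ)) ^ (-θ)) :=
      Real.summable_nat_rpow.2 (by linarith)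
    have h2 := (summable_nat_add_iff 1).2 h1
    simpa using h2
  have hζ : ∑ k ∈ Finset.range (n - 1), ((k : ℝ) + 1) ^ (-θ) ≤ zetaSum θ := by
    unfold zetaSum
    exact Summable.sum_le_tsum _ (fun i _ => by positivity) hzsum
  have hreal : |discInt n t y x| ≤ (1 + zetaSum θ) * (X * Y) := by
    rw [hdisc]
    refine le_trans hkey (mul_le_mul_of_nonneg_right (by linarith) hXY)
  have hzeta0 : 0 ≤ zetaSum θ := by
    unfold zetaSum
    exact tsum_nonneg fun i => by positivity
  have hXE : ENNReal.ofReal X = var1D p x 0 T ^ (1 / p) := by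
    rw [hXdef, ← ENNReal.ofReal_rpow_of_nonneg hVX (by positivity), hVXdef]
    rw [ENNReal.ofReal_toReal hx]
  have hYE : ENNReal.ofReal Y = var1D q y 0 T ^ (1 / q) := by
    rw [hYdef, ← ENNReal.ofReal_rpow_of_nonneg hVY (by positivity), hVYdef]
    rw [ENNReal.ofReal_toReal hy]
  calc ENNReal.ofReal |discInt n t y x|
      ≤ ENNReal.ofReal ((1 + zetaSum θ) * (X * Y)) := ENNReal.ofReal_le_ofReal hreal
    _ = ENNReal.ofReal (1 + zetaSum θ) * (ENNReal.ofReal X * ENNReal.ofReal Y) := by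
        rw [ENNReal.ofReal_mul (by linarith), ENNReal.ofReal_mul hX0]
    _ = ENNReal.ofReal (1 + zetaSum θ) *
          var1D p x 0 T ^ (1 / p) * var1D q y 0 T ^ (1 / q) := by
        rw [hXE, hYE, ← mul_assoc]
end

section
/- Let p, q ≥ 1 with θ = 1/p + 1/q > 1 and x, y : [0,T]^2 → ℝ of finite grid p- resp. q-variation with y(·,0) = 0. For dissections D = (t_i)_{i=0}^n (n ≥ 2) and D' of [0,T] and any α ∈ (1,θ), there exists i_0 ∈ {1,...,n−1} such that |∫_{D×D'} y dx − ∫_{(D∖{t_{i_0}})×D'} y dx| ≤ (n−1)^{−α}(1+ζ(θ/α))^α V_p(x;[0,T]^2) V_q(y;[0,T]^2). -/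
open Set
open scoped ENNReal NNReal

/-- The discrete 2D integral
`∫_{D×D'} y dx = Σ_i Σ_j y(t_i, s_j) x([t_{i-1},t_i]×[s_{j-1},s_j])`. -/
noncomputable def discInt2D (n m : ℕ) (t : Fin (n + 1) → ℝ) (s : Fin (m + 1) → ℝ)
    (y x : ℝ × ℝ → ℝ) : ℝ :=
  ∑ i : Fin n, ∑ j : Fin m,
    y (t i.succ, s j.succ) *
      Rect.inc x ⟨t i.castSucc, t i.succ, s j.castSucc, s j.succ⟩

section YoungTowghiAux

open Finset

private theorem yt_nn_sum_rpow {ι : Type*} (s : Finset ι) (f : ι → ℝ≥0) {w : ℝ} (hw : 1 ≤ w) :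
    ∑ i ∈ s, f i ^ w ≤ (∑ i ∈ s, f i) ^ w := by
  calc ∑ i ∈ s, f i ^ w ≤ ∑ i ∈ s, f i * (∑ j ∈ s, f j) ^ (w - 1) := by
        refine Finset.sum_le_sum fun i hi => ?_
        have : f i ^ w = f i ^ (1:ℝ) * f i ^ (w-1) := by
          rw [← NNReal.rpow_add' (by linarith)]; norm_num
        rw [this, NNReal.rpow_one]
        exact mul_le_mul_right (NNReal.rpow_le_rpow
          (Finset.single_le_sum (fun j _ => zero_le) hi) (by linarith)) _
    _ = (∑ i ∈ s, f i) ^ w := by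
        rw [← Finset.sum_mul]
        nth_rewrite 1 [← NNReal.rpow_one (∑ i ∈ s, f i)]
        rw [← NNReal.rpow_add' (x := ∑ i ∈ s, f i)
          (show (1:ℝ) + (w-1) ≠ 0 by intro h; linarith)]
        norm_num

private theorem yt_nn_holder {ι : Type*} (s : Finset ι) (f g : ι → ℝ≥0) {u v : ℝ}
    (hu : 0 < u) (hv : 0 < v) (huv : 1 ≤ u + v) :
    ∑ i ∈ s, f i ^ u * g i ^ v ≤ (∑ i ∈ s, f i) ^ u * (∑ i ∈ s, g i) ^ v := by
  have hw : 0 < u + v := by linarith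
  have hP : ((u+v)/u).HolderConjugate ((u+v)/v) := by
    refine ⟨?_, by positivity, by positivity⟩
    rw [inv_div, inv_div, inv_one]; field_simp
  have h1 : ∑ i ∈ s, f i ^ u * g i ^ v ≤
      (∑ i ∈ s, f i ^ (u+v)) ^ (u/(u+v)) * (∑ i ∈ s, g i ^ (u+v)) ^ (v/(u+v)) := by
    have := NNReal.inner_le_Lp_mul_Lq s (fun i => f i ^ u) (fun i => g i ^ v) hP
    simpa [← NNReal.rpow_natCast, ← NNReal.rpow_mul, one_div,
      div_mul_cancel₀, hu.ne', hv.ne', mul_div_assoc, mul_comm u, mul_comm v,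
      mul_div_cancel_left₀, inv_div] using this
  refine h1.trans (mul_le_mul ?_ ?_ (zero_le) (zero_le))
  · refine le_trans (NNReal.rpow_le_rpow (yt_nn_sum_rpow s _ huv) (by positivity)) ?_
    rw [← NNReal.rpow_mul, show (u+v) * (u/(u+v)) = u by field_simp]
  · refine le_trans (NNReal.rpow_le_rpow (yt_nn_sum_rpow s _ huv) (by positivity)) ?_
    rw [← NNReal.rpow_mul, show (u+v) * (v/(u+v)) = v by field_simp]

private theorem yt_ee_holder {ι : Type*} (s : Finset ι) (f g : ι → ℝ≥0∞) {u v : ℝ}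
    (hu : 0 < u) (hv : 0 < v) (huv : 1 ≤ u + v)
    (hf : ∀ i ∈ s, f i ≠ ⊤) (hg : ∀ i ∈ s, g i ≠ ⊤) :
    ∑ i ∈ s, f i ^ u * g i ^ v ≤ (∑ i ∈ s, f i) ^ u * (∑ i ∈ s, g i) ^ v := by
  have hfs : ((∑ i ∈ s, (f i).toNNReal : ℝ≥0) : ℝ≥0∞) = ∑ i ∈ s, f i := by
    rw [ENNReal.coe_finset_sum]
    exact Finset.sum_congr rfl fun i hi => ENNReal.coe_toNNReal (hf i hi)
  have hgs : ((∑ i ∈ s, (g i).toNNReal : ℝ≥0) : ℝ≥0∞) = ∑ i ∈ s, g i := by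
    rw [ENNReal.coe_finset_sum]
    exact Finset.sum_congr rfl fun i hi => ENNReal.coe_toNNReal (hg i hi)
  calc ∑ i ∈ s, f i ^ u * g i ^ v
      = ↑(∑ i ∈ s, (f i).toNNReal ^ u * (g i).toNNReal ^ v) := by
        rw [ENNReal.coe_finset_sum]
        refine Finset.sum_congr rfl fun i hi => ?_
        rw [ENNReal.coe_mul, ENNReal.coe_rpow_of_nonneg _ hu.le,
          ENNReal.coe_rpow_of_nonneg _ hv.le, ENNReal.coe_toNNReal (hf i hi),
          ENNReal.coe_toNNReal (hg i hi)]
    _ ≤ ↑((∑ i ∈ s, (f i).toNNReal) ^ u * (∑ i ∈ s, (g i).toNNReal) ^ v) :=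
        ENNReal.coe_le_coe.2 (yt_nn_holder s _ _ hu hv huv)
    _ = (∑ i ∈ s, f i) ^ u * (∑ i ∈ s, g i) ^ v := by
        rw [ENNReal.coe_mul, ENNReal.coe_rpow_of_nonneg _ hu.le,
          ENNReal.coe_rpow_of_nonneg _ hv.le, hfs, hgs]

private theorem yt_ee_rpow_sum {ι : Type*} (s : Finset ι) (f : ι → ℝ≥0∞) {γ : ℝ}
    (h0 : 0 < γ) (h1 : γ ≤ 1) : (∑ i ∈ s, f i) ^ γ ≤ ∑ i ∈ s, f i ^ γ := by
  induction s using Finset.cons_induction with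
  | empty => simp [ENNReal.zero_rpow_of_pos h0]
  | cons a s ha ih =>
      rw [Finset.sum_cons, Finset.sum_cons]
      exact le_trans (ENNReal.rpow_add_le_add_rpow _ _ h0.le h1) (add_le_add_right ih _)

private theorem yt_pair_holder {ι : Type*} (S : Finset ι) (f g : ι → ℝ≥0∞)
    (hf : ∀ i ∈ S, f i ≠ ⊤) (hg : ∀ i ∈ S, g i ≠ ⊤) {e pp qq : ℝ}
    (hpp : 0 < pp) (hqq : 0 < qq) (he : 0 < e) (h1 : 1 ≤ e/pp + e/qq) :
    ∑ i ∈ S, (f i * g i) ^ e ≤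
      (∑ i ∈ S, f i ^ pp) ^ (e/pp) * (∑ i ∈ S, g i ^ qq) ^ (e/qq) := by
  have hrw : ∀ i ∈ S, (f i * g i) ^ e = (f i ^ pp) ^ (e/pp) * (g i ^ qq) ^ (e/qq) := by
    intro i hi
    rw [ENNReal.mul_rpow_of_nonneg _ _ he.le, ← ENNReal.rpow_mul, ← ENNReal.rpow_mul,
      show pp * (e/pp) = e by field_simp, show qq * (e/qq) = e by field_simp]
  rw [Finset.sum_congr rfl hrw]
  exact yt_ee_holder S _ _ (by positivity) (by positivity) h1
    (fun i hi => ENNReal.rpow_ne_top_of_nonneg hpp.le (hf i hi))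
    (fun i hi => ENNReal.rpow_ne_top_of_nonneg hqq.le (hg i hi))

private theorem yt_peel_sum {n : ℕ} (c : Fin (n+1)) (u : Fin (n+3) → ℝ) (F : ℝ → ℝ → ℝ) :
    ∑ i : Fin (n+2), F (u i.castSucc) (u i.succ) -
      ∑ i : Fin (n+1), F (u ((c.succ.castSucc).succAbove i.castSucc))
        (u ((c.succ.castSucc).succAbove i.succ)) =
    F (u c.castSucc.castSucc) (u c.castSucc.succ) + F (u c.succ.castSucc) (u c.succ.succ)
      - F (u c.castSucc.castSucc) (u c.succ.succ) := by
  have hpeel := Fin.sum_univ_succAbove (fun i : Fin (n+2) => F (u i.castSucc) (u i.succ)) c.succ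
  rw [hpeel]
  have hterm : ∀ i : Fin (n+1), i ≠ c →
      F (u (c.succ.succAbove i).castSucc) (u (c.succ.succAbove i).succ) =
      F (u ((c.succ.castSucc).succAbove i.castSucc)) (u ((c.succ.castSucc).succAbove i.succ)) := by
    intro i hic
    rcases lt_or_gt_of_ne hic with h | h
    · have hi : (i : ℕ) < (c : ℕ) := Fin.lt_def.mp h
      rw [Fin.succAbove_of_castSucc_lt c.succ i
          (Fin.lt_def.mpr (by simp only [Fin.coe_castSucc, Fin.val_succ]; omega)),
        Fin.succAbove_of_castSucc_lt _ i.castSucc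
          (Fin.lt_def.mpr (by simp only [Fin.coe_castSucc, Fin.val_succ]; omega)),
        Fin.succAbove_of_castSucc_lt _ i.succ
          (Fin.lt_def.mpr (by simp only [Fin.coe_castSucc, Fin.val_succ]; omega))]
      rw [Fin.succ_castSucc]
    · have hi : (c : ℕ) < (i : ℕ) := Fin.lt_def.mp h
      rw [Fin.succAbove_of_le_castSucc c.succ i
          (Fin.le_def.mpr (by simp only [Fin.coe_castSucc, Fin.val_succ]; omega)),
        Fin.succAbove_of_le_castSucc _ i.castSucc
          (Fin.le_def.mpr (by simp only [Fin.coe_castSucc, Fin.val_succ]; omega)),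
        Fin.succAbove_of_le_castSucc _ i.succ
          (Fin.le_def.mpr (by simp only [Fin.coe_castSucc, Fin.val_succ]; omega))]
      rw [Fin.succ_castSucc]
  have hc1 : c.succ.succAbove c = c.castSucc :=
    Fin.succAbove_of_castSucc_lt _ _ (Fin.castSucc_lt_succ (i := c))
  have hc2 : (c.succ.castSucc).succAbove c.castSucc = c.castSucc.castSucc :=
    Fin.succAbove_of_castSucc_lt _ _
      (Fin.lt_def.mpr (by simp only [Fin.coe_castSucc, Fin.val_succ]; omega))
  have hc3 : (c.succ.castSucc).succAbove c.succ = c.succ.succ :=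
    Fin.succAbove_of_le_castSucc _ _
      (Fin.le_def.mpr (by simp only [Fin.coe_castSucc, Fin.val_succ]; omega))
  have key : ∀ i : Fin (n+1),
      F (u (c.succ.succAbove i).castSucc) (u (c.succ.succAbove i).succ) -
      F (u ((c.succ.castSucc).succAbove i.castSucc)) (u ((c.succ.castSucc).succAbove i.succ)) =
      if i = c then F (u c.castSucc.castSucc) (u c.castSucc.succ)
        - F (u c.castSucc.castSucc) (u c.succ.succ) else 0 := by
    intro i
    by_cases hic : i = c
    · subst hic
      rw [hc1, hc2, hc3, if_pos rfl, Fin.succ_castSucc]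
    · rw [hterm i hic, if_neg hic, sub_self]
  have hdiff :
      (∑ i : Fin (n+1), F (u (c.succ.succAbove i).castSucc) (u (c.succ.succAbove i).succ)) -
      (∑ i : Fin (n+1), F (u ((c.succ.castSucc).succAbove i.castSucc))
        (u ((c.succ.castSucc).succAbove i.succ))) =
      F (u c.castSucc.castSucc) (u c.castSucc.succ)
        - F (u c.castSucc.castSucc) (u c.succ.succ) := by
    rw [← Finset.sum_sub_distrib, Finset.sum_congr rfl (fun i _ => key i),
      Finset.sum_ite_eq' Finset.univ c]
    simp
  linarith [hdiff]

private theorem yt_sub_sum_cast {M N : ℕ} (F : Fin (M+1) → Fin (N+1) → ℝ≥0∞) :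
    ∑ i : Fin M, ∑ j : Fin N, F i.castSucc j.castSucc ≤
      ∑ i : Fin (M+1), ∑ j : Fin (N+1), F i j := by
  calc ∑ i : Fin M, ∑ j : Fin N, F i.castSucc j.castSucc
      ≤ ∑ i : Fin M, ∑ j : Fin (N+1), F i.castSucc j := by
        refine Finset.sum_le_sum fun i _ => ?_
        rw [Fin.sum_univ_castSucc (f := fun j => F i.castSucc j)]
        exact le_self_add
    _ ≤ ∑ i : Fin (M+1), ∑ j : Fin (N+1), F i j := by
        rw [Fin.sum_univ_castSucc (f := fun i => ∑ j : Fin (N+1), F i j)]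
        exact le_self_add

private theorem yt_sub_sum_succ {M N : ℕ} (F : Fin (M+1) → Fin (N+1) → ℝ≥0∞) :
    ∑ i : Fin M, ∑ j : Fin N, F i.succ j.succ ≤
      ∑ i : Fin (M+1), ∑ j : Fin (N+1), F i j := by
  calc ∑ i : Fin M, ∑ j : Fin N, F i.succ j.succ
      ≤ ∑ i : Fin M, ∑ j : Fin (N+1), F i.succ j := by
        refine Finset.sum_le_sum fun i _ => ?_
        rw [Fin.sum_univ_succ (f := fun j => F i.succ j)]
        exact le_add_self
    _ ≤ ∑ i : Fin (M+1), ∑ j : Fin (N+1), F i j := by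
        rw [Fin.sum_univ_succ (f := fun i => ∑ j : Fin (N+1), F i j)]
        exact le_add_self

private theorem yt_grid_le (pp : ℝ) (f : ℝ × ℝ → ℝ) (T : ℝ) {n k : ℕ}
    (t : Fin (n+1) → ℝ) (s : Fin (k+1) → ℝ) (ht : Monotone t) (hs : Monotone s)
    (ht0 : t 0 = 0) (htl : t (Fin.last n) = T) (hs0 : s 0 = 0) (hsl : s (Fin.last k) = T) :
    ∑ i : Fin n, ∑ j : Fin k,
      ENNReal.ofReal |Rect.inc f ⟨t i.castSucc, t i.succ, s j.castSucc, s j.succ⟩| ^ pp ≤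
      gridVarSum pp f (Rect.mk 0 T 0 T) :=
  le_iSup_of_le n (le_iSup_of_le k (le_iSup_of_le t (le_iSup_of_le s (le_iSup_of_le ht
    (le_iSup_of_le hs (le_iSup_of_le ht0 (le_iSup_of_le htl (le_iSup_of_le hs0
      (le_iSup_of_le hsl le_rfl)))))))))

/-- The 1D discrete integral `∫_{D'} y([b,d]×[0,·]) dx([a,b]×·)`. -/
private noncomputable def ytG (x y : ℝ × ℝ → ℝ) (a b d : ℝ) (k : ℕ)
    (s : Fin (k+1) → ℝ) : ℝ :=
  ∑ j : Fin k, Rect.inc y ⟨b, d, 0, s j.succ⟩ * Rect.inc x ⟨a, b, s j.castSucc, s j.succ⟩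

private theorem yt_zeta_bound {c : ℝ} (hc : 1 < c) (k : ℕ) :
    ∑ r ∈ Finset.range k, ((r:ℝ≥0∞)+1)⁻¹ ^ c ≤ ENNReal.ofReal (zetaSum c) := by
  have hsum : Summable (fun n : ℕ => ((n:ℝ)+1) ^ (-c)) := by
    have h0 : Summable (fun n : ℕ => (n:ℝ) ^ (-c)) := Real.summable_nat_rpow.mpr (by linarith)
    refine ((summable_nat_add_iff 1).mpr h0).congr fun n => ?_
    push_cast; ring_nf
  calc ∑ r ∈ Finset.range k, ((r:ℝ≥0∞)+1)⁻¹ ^ c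
      = ∑ r ∈ Finset.range k, ENNReal.ofReal (((r:ℝ)+1) ^ (-c)) := by
        refine Finset.sum_congr rfl fun r _ => ?_
        have h1 : ((r:ℝ≥0∞)+1) = ENNReal.ofReal ((r:ℝ)+1) := by
          rw [ENNReal.ofReal_add (by positivity) zero_le_one]
          simp
        rw [h1, ENNReal.inv_rpow, ← ENNReal.rpow_neg,
          ENNReal.ofReal_rpow_of_pos (by positivity)]
    _ = ENNReal.ofReal (∑ r ∈ Finset.range k, ((r:ℝ)+1) ^ (-c)) :=
        (ENNReal.ofReal_sum_of_nonneg (fun i _ => Real.rpow_nonneg (by positivity) _)).symm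
    _ ≤ ENNReal.ofReal (zetaSum c) := by
        refine ENNReal.ofReal_le_ofReal ?_
        exact hsum.sum_le_tsum _ (fun i _ => Real.rpow_nonneg (by positivity) _)

end YoungTowghiAux
private theorem yt_core (p q T α : ℝ) (hp : 1 ≤ p) (hq : 1 ≤ q)
    (hθ : 1 < 1/p + 1/q) (hα : 1 < α) (hαθ : α < 1/p + 1/q)
    (x y : ℝ × ℝ → ℝ) (m : ℕ) (t : Fin (m+3) → ℝ) (ht : Monotone t)
    (ht0 : t 0 = 0) (htl : t (Fin.last (m+2)) = T) :
    ∀ (k : ℕ) (s : Fin (k+1) → ℝ), Monotone s → s 0 = 0 → s (Fin.last k) = T →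
    ∑ i : Fin (m+1), (ENNReal.ofReal
        |ytG x y (t i.castSucc.castSucc) (t i.succ.castSucc) (t i.succ.succ) k s|) ^ (1/α)
      ≤ (1 + ∑ r ∈ Finset.range (k-1), ((r:ℝ≥0∞)+1)⁻¹ ^ ((1/p+1/q)/α)) *
        (gridVarSum p x (Rect.mk 0 T 0 T) ^ ((1/α)/p) *
         gridVarSum q y (Rect.mk 0 T 0 T) ^ ((1/α)/q)) := by
  have hp0 : 0 < p := lt_of_lt_of_le one_pos hp
  have hq0 : 0 < q := lt_of_lt_of_le one_pos hq
  have hα0 : 0 < α := lt_trans one_pos hα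
  have hth0 : 0 < 1/p + 1/q := lt_trans one_pos hθ
  have hα1 : 0 < 1/α := by positivity
  have hα1' : 1/α ≤ 1 := by
    rw [div_le_one hα0]; exact hα.le
  have hbase_exp : 1 ≤ (1/α)/p + (1/α)/q := by
    have h : (1/α)/p + (1/α)/q = (1/p+1/q)/α := by ring
    rw [h, le_div_iff₀ hα0, one_mul]; exact hαθ.le
  set Vp := gridVarSum p x (Rect.mk 0 T 0 T) with hVp
  set Vq := gridVarSum q y (Rect.mk 0 T 0 T) with hVq
  intro k
  induction k with
  | zero =>
      intro s _ _ _
      have hzero : ∑ i : Fin (m+1), (ENNReal.ofReal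
          |ytG x y (t i.castSucc.castSucc) (t i.succ.castSucc) (t i.succ.succ) 0 s|) ^ (1/α) = 0 :=
        Finset.sum_eq_zero fun i _ => by simp [ytG, hα0]
      rw [hzero]
      exact zero_le
  | succ n ih =>
      obtain _ | n := n
      · -- base case: s : Fin 2 → ℝ
        intro s hs hs0 hsl
        have hXsum : ∑ i : Fin (m+1),
            ENNReal.ofReal |Rect.inc x ⟨t i.castSucc.castSucc, t i.succ.castSucc, s 0, s 1⟩| ^ p
            ≤ Vp := by
          refine le_trans ?_ (yt_grid_le p x T t s ht hs ht0 htl hs0 hsl)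
          calc ∑ i : Fin (m+1),
              ENNReal.ofReal |Rect.inc x ⟨t i.castSucc.castSucc, t i.succ.castSucc, s 0, s 1⟩| ^ p
              = ∑ i : Fin (m+1), ∑ j : Fin 1, ENNReal.ofReal
                  |Rect.inc x ⟨t i.castSucc.castSucc, t i.castSucc.succ, s j.castSucc, s j.succ⟩| ^ p := by
                refine Finset.sum_congr rfl fun i _ => ?_
                rw [Fin.sum_univ_one]
                rw [← Fin.succ_castSucc]
                norm_num
            _ ≤ ∑ i : Fin (m+2), ∑ j : Fin 1, ENNReal.ofReal
                  |Rect.inc x ⟨t i.castSucc, t i.succ, s j.castSucc, s j.succ⟩| ^ p := by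
                rw [Fin.sum_univ_castSucc (f := fun i : Fin (m+2) => ∑ j : Fin 1, ENNReal.ofReal
                  |Rect.inc x ⟨t i.castSucc, t i.succ, s j.castSucc, s j.succ⟩| ^ p)]
                exact le_self_add
        have hYsum : ∑ i : Fin (m+1),
            ENNReal.ofReal |Rect.inc y ⟨t i.succ.castSucc, t i.succ.succ, s 0, s 1⟩| ^ q
            ≤ Vq := by
          refine le_trans ?_ (yt_grid_le q y T t s ht hs ht0 htl hs0 hsl)
          calc ∑ i : Fin (m+1),
              ENNReal.ofReal |Rect.inc y ⟨t i.succ.castSucc, t i.succ.succ, s 0, s 1⟩| ^ q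
              = ∑ i : Fin (m+1), ∑ j : Fin 1, ENNReal.ofReal
                  |Rect.inc y ⟨t i.succ.castSucc, t i.succ.succ, s j.castSucc, s j.succ⟩| ^ q := by
                refine Finset.sum_congr rfl fun i _ => ?_
                rw [Fin.sum_univ_one]
                norm_num
            _ ≤ ∑ i : Fin (m+2), ∑ j : Fin 1, ENNReal.ofReal
                  |Rect.inc y ⟨t i.castSucc, t i.succ, s j.castSucc, s j.succ⟩| ^ q := by
                rw [Fin.sum_univ_succ (f := fun i : Fin (m+2) => ∑ j : Fin 1, ENNReal.ofReal
                  |Rect.inc y ⟨t i.castSucc, t i.succ, s j.castSucc, s j.succ⟩| ^ q)]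
                exact le_add_self
        calc ∑ i : Fin (m+1), (ENNReal.ofReal
              |ytG x y (t i.castSucc.castSucc) (t i.succ.castSucc) (t i.succ.succ) 1 s|) ^ (1/α)
            = ∑ i : Fin (m+1),
                (ENNReal.ofReal |Rect.inc x ⟨t i.castSucc.castSucc, t i.succ.castSucc, s 0, s 1⟩| *
                 ENNReal.ofReal |Rect.inc y ⟨t i.succ.castSucc, t i.succ.succ, s 0, s 1⟩|) ^ (1/α) := by
              refine Finset.sum_congr rfl fun i _ => ?_
              have hG : ytG x y (t i.castSucc.castSucc) (t i.succ.castSucc) (t i.succ.succ) 1 s =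
                  Rect.inc y ⟨t i.succ.castSucc, t i.succ.succ, (0:ℝ), s 1⟩ *
                  Rect.inc x ⟨t i.castSucc.castSucc, t i.succ.castSucc, s 0, s 1⟩ := by
                simp [ytG]
              rw [hG, ← hs0, abs_mul, ENNReal.ofReal_mul (abs_nonneg _), mul_comm]
          _ ≤ (∑ i : Fin (m+1),
                ENNReal.ofReal |Rect.inc x ⟨t i.castSucc.castSucc, t i.succ.castSucc, s 0, s 1⟩| ^ p) ^ ((1/α)/p) *
              (∑ i : Fin (m+1),
                ENNReal.ofReal |Rect.inc y ⟨t i.succ.castSucc, t i.succ.succ, s 0, s 1⟩| ^ q) ^ ((1/α)/q) :=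
              yt_pair_holder Finset.univ _ _ (fun i _ => ENNReal.ofReal_ne_top)
                (fun i _ => ENNReal.ofReal_ne_top) hp0 hq0 hα1 hbase_exp
          _ ≤ Vp ^ ((1/α)/p) * Vq ^ ((1/α)/q) := by
              exact mul_le_mul (ENNReal.rpow_le_rpow hXsum (by positivity))
                (ENNReal.rpow_le_rpow hYsum (by positivity)) (zero_le) (zero_le)
          _ ≤ (1 + ∑ r ∈ Finset.range (1-1), ((r:ℝ≥0∞)+1)⁻¹ ^ ((1/p+1/q)/α)) *
              (Vp ^ ((1/α)/p) * Vq ^ ((1/α)/q)) := by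
              refine le_mul_of_one_le_left (zero_le) ?_
              exact self_le_add_right 1 _
      · -- inductive step: s : Fin (n+3) → ℝ
        intro s hs hs0 hsl
        have hpne : p ≠ 0 := hp0.ne'
        have hqne : q ≠ 0 := hq0.ne'
        have hαne : α ≠ 0 := hα0.ne'
        have hthne : 1/p+1/q ≠ 0 := hth0.ne'
        have hβ0 : 0 < α/(1/p+1/q) := by positivity
        have hβ1 : α/(1/p+1/q) ≤ 1 := by rw [div_le_one hth0]; exact hαθ.le
        have hinv : (0:ℝ) < 1/(1/p+1/q) := by positivity
        have hθα0 : (0:ℝ) < (1/p+1/q)/α := by positivity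
        have hstep_exp : 1 ≤ (1/(1/p+1/q))/p + (1/(1/p+1/q))/q := by
          have h : (1/(1/p+1/q))/p + (1/(1/p+1/q))/q = 1 := by
            field_simp
            try ring
          rw [h]
        have hcomp : (1/α) * (α/(1/p+1/q)) = 1/(1/p+1/q) := by
          field_simp
          try ring
        have hcomp2 : (α/(1/p+1/q)) * ((1/p+1/q)/α) = 1 := by
          field_simp
          try ring
        have hcomp3p : ((1/(1/p+1/q))/p) * ((1/p+1/q)/α) = (1/α)/p := by
          rw [div_mul_div_comm, show 1/(1/p+1/q) * (1/p+1/q) = 1 by field_simp, div_div]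
          ring
        have hcomp3q : ((1/(1/p+1/q))/q) * ((1/p+1/q)/α) = (1/α)/q := by
          rw [div_mul_div_comm, show 1/(1/p+1/q) * (1/p+1/q) = 1 by field_simp, div_div]
          ring
        set D : Fin (n+1) → ℝ≥0∞ := fun c => ∑ i : Fin (m+1),
          (ENNReal.ofReal |Rect.inc x ⟨t i.castSucc.castSucc, t i.succ.castSucc,
              s c.castSucc.castSucc, s c.succ.castSucc⟩| *
           ENNReal.ofReal |Rect.inc y ⟨t i.succ.castSucc, t i.succ.succ,
              s c.succ.castSucc, s c.succ.succ⟩|) ^ (1/α) with hD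
        obtain ⟨c, -, hmin⟩ := Finset.univ.exists_min_image D Finset.univ_nonempty
        have hcval : (c:ℕ) < n + 1 := c.isLt
        -- the dissection with the point s (c+1) removed
        have hj0ne : (c.succ.castSucc : Fin (n+3)) ≠ 0 := by
          simp only [ne_eq, Fin.ext_iff, Fin.coe_castSucc, Fin.val_succ, Fin.val_zero]; omega
        have hj0 : (c.succ.castSucc : Fin (n+3)).succAbove 0 = 0 :=
          Fin.succAbove_ne_zero_zero hj0ne
        have hjl : (c.succ.castSucc : Fin (n+3)).succAbove (Fin.last (n+1)) = Fin.last (n+2) := by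
          rw [Fin.succAbove_of_le_castSucc _ _ (Fin.le_def.mpr (by
            simp only [Fin.coe_castSucc, Fin.val_succ, Fin.val_last]; omega))]
          exact Fin.succ_last (n+1)
        have hs' : Monotone (fun j : Fin (n+2) => s ((c.succ.castSucc : Fin (n+3)).succAbove j)) :=
          hs.comp (Fin.strictMono_succAbove _).monotone
        have hs'0 : (fun j : Fin (n+2) => s ((c.succ.castSucc : Fin (n+3)).succAbove j)) 0 = 0 := by
          simp only [hj0]; exact hs0
        have hs'l : (fun j : Fin (n+2) => s ((c.succ.castSucc : Fin (n+3)).succAbove j))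
            (Fin.last (n+1)) = T := by
          simp only [hjl]; exact hsl
        -- removal identity
        have hrem : ∀ a b d : ℝ, ytG x y a b d (n+2) s -
            ytG x y a b d (n+1) (fun j => s ((c.succ.castSucc : Fin (n+3)).succAbove j)) =
            -(Rect.inc y ⟨b, d, s c.succ.castSucc, s c.succ.succ⟩ *
              Rect.inc x ⟨a, b, s c.castSucc.castSucc, s c.succ.castSucc⟩) := by
          intro a b d
          calc ytG x y a b d (n+2) s -
              ytG x y a b d (n+1) (fun j => s ((c.succ.castSucc : Fin (n+3)).succAbove j))
              = Rect.inc y ⟨b,d,0, s c.castSucc.succ⟩ *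
                  Rect.inc x ⟨a,b, s c.castSucc.castSucc, s c.castSucc.succ⟩
                + Rect.inc y ⟨b,d,0, s c.succ.succ⟩ *
                  Rect.inc x ⟨a,b, s c.succ.castSucc, s c.succ.succ⟩
                - Rect.inc y ⟨b,d,0, s c.succ.succ⟩ *
                  Rect.inc x ⟨a,b, s c.castSucc.castSucc, s c.succ.succ⟩ :=
              yt_peel_sum c s (fun a' b' => Rect.inc y ⟨b, d, 0, b'⟩ * Rect.inc x ⟨a, b, a', b'⟩)
            _ = -(Rect.inc y ⟨b, d, s c.succ.castSucc, s c.succ.succ⟩ *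
                  Rect.inc x ⟨a, b, s c.castSucc.castSucc, s c.succ.castSucc⟩) := by
                rw [Fin.succ_castSucc]
                simp only [Rect.inc]
                ring
        -- pointwise estimate
        have hstep : ∀ i : Fin (m+1),
            (ENNReal.ofReal |ytG x y (t i.castSucc.castSucc) (t i.succ.castSucc)
              (t i.succ.succ) (n+2) s|) ^ (1/α) ≤
            (ENNReal.ofReal |ytG x y (t i.castSucc.castSucc) (t i.succ.castSucc)
              (t i.succ.succ) (n+1)
              (fun j => s ((c.succ.castSucc : Fin (n+3)).succAbove j))|) ^ (1/α) +
            (ENNReal.ofReal |Rect.inc x ⟨t i.castSucc.castSucc, t i.succ.castSucc,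
                s c.castSucc.castSucc, s c.succ.castSucc⟩| *
             ENNReal.ofReal |Rect.inc y ⟨t i.succ.castSucc, t i.succ.succ,
                s c.succ.castSucc, s c.succ.succ⟩|) ^ (1/α) := by
          intro i
          have h2 := hrem (t i.castSucc.castSucc) (t i.succ.castSucc) (t i.succ.succ)
          have h1 : |ytG x y (t i.castSucc.castSucc) (t i.succ.castSucc) (t i.succ.succ) (n+2) s| ≤
              |ytG x y (t i.castSucc.castSucc) (t i.succ.castSucc) (t i.succ.succ) (n+1)
                (fun j => s ((c.succ.castSucc : Fin (n+3)).succAbove j))| +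
              |Rect.inc y ⟨t i.succ.castSucc, t i.succ.succ, s c.succ.castSucc, s c.succ.succ⟩| *
              |Rect.inc x ⟨t i.castSucc.castSucc, t i.succ.castSucc,
                s c.castSucc.castSucc, s c.succ.castSucc⟩| := by
            calc |ytG x y (t i.castSucc.castSucc) (t i.succ.castSucc) (t i.succ.succ) (n+2) s|
                = |ytG x y (t i.castSucc.castSucc) (t i.succ.castSucc) (t i.succ.succ) (n+1)
                    (fun j => s ((c.succ.castSucc : Fin (n+3)).succAbove j)) +
                   (ytG x y (t i.castSucc.castSucc) (t i.succ.castSucc) (t i.succ.succ) (n+2) s -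
                    ytG x y (t i.castSucc.castSucc) (t i.succ.castSucc) (t i.succ.succ) (n+1)
                    (fun j => s ((c.succ.castSucc : Fin (n+3)).succAbove j)))| := by
                  congr 1; ring
              _ ≤ _ + _ := abs_add_le _ _
              _ = _ := by rw [h2, abs_neg, abs_mul]
          calc (ENNReal.ofReal |ytG x y (t i.castSucc.castSucc) (t i.succ.castSucc)
                (t i.succ.succ) (n+2) s|) ^ (1/α)
              ≤ (ENNReal.ofReal
                  (|ytG x y (t i.castSucc.castSucc) (t i.succ.castSucc) (t i.succ.succ) (n+1)
                    (fun j => s ((c.succ.castSucc : Fin (n+3)).succAbove j))| +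
                  |Rect.inc y ⟨t i.succ.castSucc, t i.succ.succ, s c.succ.castSucc, s c.succ.succ⟩| *
                  |Rect.inc x ⟨t i.castSucc.castSucc, t i.succ.castSucc,
                    s c.castSucc.castSucc, s c.succ.castSucc⟩|)) ^ (1/α) :=
                ENNReal.rpow_le_rpow (ENNReal.ofReal_le_ofReal h1) hα1.le
            _ = (ENNReal.ofReal |ytG x y (t i.castSucc.castSucc) (t i.succ.castSucc)
                  (t i.succ.succ) (n+1)
                  (fun j => s ((c.succ.castSucc : Fin (n+3)).succAbove j))| +
                 ENNReal.ofReal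
                  (|Rect.inc y ⟨t i.succ.castSucc, t i.succ.succ, s c.succ.castSucc, s c.succ.succ⟩| *
                   |Rect.inc x ⟨t i.castSucc.castSucc, t i.succ.castSucc,
                    s c.castSucc.castSucc, s c.succ.castSucc⟩|)) ^ (1/α) := by
                rw [ENNReal.ofReal_add (abs_nonneg _) (by positivity)]
            _ ≤ _ := by
                refine le_trans (ENNReal.rpow_add_le_add_rpow _ _ hα1.le hα1') ?_
                refine add_le_add_right (le_of_eq ?_) _
                rw [ENNReal.ofReal_mul (abs_nonneg _), mul_comm]
        -- sum the pointwise estimates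
        have hsum1 : ∑ i : Fin (m+1), (ENNReal.ofReal |ytG x y (t i.castSucc.castSucc)
              (t i.succ.castSucc) (t i.succ.succ) (n+2) s|) ^ (1/α) ≤
            (∑ i : Fin (m+1), (ENNReal.ofReal |ytG x y (t i.castSucc.castSucc)
              (t i.succ.castSucc) (t i.succ.succ) (n+1)
              (fun j => s ((c.succ.castSucc : Fin (n+3)).succAbove j))|) ^ (1/α)) + D c := by
          refine le_trans (Finset.sum_le_sum fun i _ => hstep i) ?_
          rw [Finset.sum_add_distrib, hD]
        have hpow : ∀ c' : Fin (n+1), (D c)^(α/(1/p+1/q)) ≤ (D c')^(α/(1/p+1/q)) :=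
          fun c' => ENNReal.rpow_le_rpow (hmin c' (Finset.mem_univ c')) hβ0.le
        have hcard : ((n:ℝ≥0∞)+1) * (D c)^(α/(1/p+1/q)) ≤
            ∑ c' : Fin (n+1), (D c')^(α/(1/p+1/q)) := by
          have h := Finset.card_nsmul_le_sum Finset.univ
            (fun c' => (D c')^(α/(1/p+1/q))) ((D c)^(α/(1/p+1/q))) (fun c' _ => hpow c')
          rw [Finset.card_univ, Fintype.card_fin, nsmul_eq_mul] at h
          push_cast at h
          exact h
        have hgridx : ∑ c' : Fin (n+1), ∑ i : Fin (m+1), ENNReal.ofReal |Rect.inc x ⟨t i.castSucc.castSucc, t i.succ.castSucc,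
              s c'.castSucc.castSucc, s c'.succ.castSucc⟩| ^ p ≤ Vp := by
          calc ∑ c' : Fin (n+1), ∑ i : Fin (m+1), ENNReal.ofReal |Rect.inc x ⟨t i.castSucc.castSucc, t i.succ.castSucc,
                s c'.castSucc.castSucc, s c'.succ.castSucc⟩| ^ p
              = ∑ i : Fin (m+1), ∑ c' : Fin (n+1), ENNReal.ofReal |Rect.inc x ⟨t i.castSucc.castSucc, t i.castSucc.succ,
                  s c'.castSucc.castSucc, s c'.castSucc.succ⟩| ^ p := by
                rw [Finset.sum_comm]
                refine Finset.sum_congr rfl fun i _ => Finset.sum_congr rfl fun c' _ => ?_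
                rw [Fin.succ_castSucc, Fin.succ_castSucc]
            _ ≤ ∑ i' : Fin (m+2), ∑ j' : Fin (n+2), ENNReal.ofReal |Rect.inc x ⟨t i'.castSucc, t i'.succ, s j'.castSucc, s j'.succ⟩| ^ p :=
                yt_sub_sum_cast (fun i' j' => ENNReal.ofReal |Rect.inc x ⟨t i'.castSucc, t i'.succ, s j'.castSucc, s j'.succ⟩| ^ p)
            _ ≤ Vp := yt_grid_le p x T t s ht hs ht0 htl hs0 hsl
        have hgridy : ∑ c' : Fin (n+1), ∑ i : Fin (m+1), ENNReal.ofReal |Rect.inc y ⟨t i.succ.castSucc, t i.succ.succ,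
              s c'.succ.castSucc, s c'.succ.succ⟩| ^ q ≤ Vq := by
          calc ∑ c' : Fin (n+1), ∑ i : Fin (m+1), ENNReal.ofReal |Rect.inc y ⟨t i.succ.castSucc, t i.succ.succ,
                s c'.succ.castSucc, s c'.succ.succ⟩| ^ q
              = ∑ i : Fin (m+1), ∑ c' : Fin (n+1), ENNReal.ofReal |Rect.inc y ⟨t i.succ.castSucc, t i.succ.succ,
                  s c'.succ.castSucc, s c'.succ.succ⟩| ^ q := Finset.sum_comm
            _ ≤ ∑ i' : Fin (m+2), ∑ j' : Fin (n+2), ENNReal.ofReal |Rect.inc y ⟨t i'.castSucc, t i'.succ, s j'.castSucc, s j'.succ⟩| ^ q :=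
                yt_sub_sum_succ (fun i' j' => ENNReal.ofReal |Rect.inc y ⟨t i'.castSucc, t i'.succ, s j'.castSucc, s j'.succ⟩| ^ q)
            _ ≤ Vq := yt_grid_le q y T t s ht hs ht0 htl hs0 hsl
        have hprod : ∑ c' : Fin (n+1), (D c')^(α/(1/p+1/q)) ≤
            Vp ^ ((1/(1/p+1/q))/p) * Vq ^ ((1/(1/p+1/q))/q) := by
          have h1 : ∀ c' : Fin (n+1), (D c')^(α/(1/p+1/q)) ≤ ∑ i : Fin (m+1),
              (ENNReal.ofReal |Rect.inc x ⟨t i.castSucc.castSucc, t i.succ.castSucc,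
                  s c'.castSucc.castSucc, s c'.succ.castSucc⟩| *
               ENNReal.ofReal |Rect.inc y ⟨t i.succ.castSucc, t i.succ.succ,
                  s c'.succ.castSucc, s c'.succ.succ⟩|) ^ (1/(1/p+1/q)) := by
            intro c'
            rw [hD]
            refine le_trans (yt_ee_rpow_sum Finset.univ _ hβ0 hβ1)
              (le_of_eq (Finset.sum_congr rfl fun i _ => ?_))
            rw [← ENNReal.rpow_mul, hcomp]
          refine le_trans (Finset.sum_le_sum fun c' _ => h1 c') ?_
          have h2 := yt_pair_holder (Finset.univ : Finset (Fin (n+1) × Fin (m+1)))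
            (fun z => ENNReal.ofReal |Rect.inc x ⟨t z.2.castSucc.castSucc, t z.2.succ.castSucc,
              s z.1.castSucc.castSucc, s z.1.succ.castSucc⟩|)
            (fun z => ENNReal.ofReal |Rect.inc y ⟨t z.2.succ.castSucc, t z.2.succ.succ,
              s z.1.succ.castSucc, s z.1.succ.succ⟩|)
            (fun _ _ => ENNReal.ofReal_ne_top) (fun _ _ => ENNReal.ofReal_ne_top)
            hp0 hq0 hinv hstep_exp
          rw [Fintype.sum_prod_type] at h2
          refine le_trans h2 (mul_le_mul (ENNReal.rpow_le_rpow ?_ (by positivity))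
            (ENNReal.rpow_le_rpow ?_ (by positivity)) (zero_le) (zero_le))
          · rw [Fintype.sum_prod_type]
            exact hgridx
          · rw [Fintype.sum_prod_type]
            exact hgridy
        have hDc : D c ≤ ((n:ℝ≥0∞)+1)⁻¹ ^ ((1/p+1/q)/α) *
            (Vp ^ ((1/α)/p) * Vq ^ ((1/α)/q)) := by
          have hne0 : ((n:ℝ≥0∞)+1) ≠ 0 := by simp
          have hnetop : ((n:ℝ≥0∞)+1) ≠ ⊤ :=
            ENNReal.add_ne_top.mpr ⟨ENNReal.natCast_ne_top n, ENNReal.one_ne_top⟩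
          have e2 : (D c)^(α/(1/p+1/q)) ≤ ((n:ℝ≥0∞)+1)⁻¹ *
              (Vp ^ ((1/(1/p+1/q))/p) * Vq ^ ((1/(1/p+1/q))/q)) := by
            calc (D c)^(α/(1/p+1/q))
                = ((n:ℝ≥0∞)+1)⁻¹ * (((n:ℝ≥0∞)+1) * (D c)^(α/(1/p+1/q))) := by
                  rw [← mul_assoc, ENNReal.inv_mul_cancel hne0 hnetop, one_mul]
              _ ≤ ((n:ℝ≥0∞)+1)⁻¹ * (∑ c' : Fin (n+1), (D c')^(α/(1/p+1/q))) :=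
                  mul_le_mul_right hcard _
              _ ≤ _ := mul_le_mul_right hprod _
          calc D c = ((D c)^(α/(1/p+1/q))) ^ ((1/p+1/q)/α) := by
                rw [← ENNReal.rpow_mul, hcomp2, ENNReal.rpow_one]
            _ ≤ (((n:ℝ≥0∞)+1)⁻¹ * (Vp ^ ((1/(1/p+1/q))/p) * Vq ^ ((1/(1/p+1/q))/q))) ^
                  ((1/p+1/q)/α) := ENNReal.rpow_le_rpow e2 hθα0.le
            _ = ((n:ℝ≥0∞)+1)⁻¹ ^ ((1/p+1/q)/α) * (Vp ^ ((1/α)/p) * Vq ^ ((1/α)/q)) := by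
                rw [ENNReal.mul_rpow_of_nonneg _ _ hθα0.le,
                  ENNReal.mul_rpow_of_nonneg _ _ hθα0.le,
                  ← ENNReal.rpow_mul, ← ENNReal.rpow_mul, hcomp3p, hcomp3q]
        have hIH := ih (fun j => s ((c.succ.castSucc : Fin (n+3)).succAbove j)) hs' hs'0 hs'l
        calc ∑ i : Fin (m+1), (ENNReal.ofReal |ytG x y (t i.castSucc.castSucc)
              (t i.succ.castSucc) (t i.succ.succ) (n+1+1) s|) ^ (1/α)
            ≤ (∑ i : Fin (m+1), (ENNReal.ofReal |ytG x y (t i.castSucc.castSucc)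
                (t i.succ.castSucc) (t i.succ.succ) (n+1)
                (fun j => s ((c.succ.castSucc : Fin (n+3)).succAbove j))|) ^ (1/α)) + D c := hsum1
          _ ≤ (1 + ∑ r ∈ Finset.range n, ((r:ℝ≥0∞)+1)⁻¹ ^ ((1/p+1/q)/α)) *
                (Vp ^ ((1/α)/p) * Vq ^ ((1/α)/q)) +
              ((n:ℝ≥0∞)+1)⁻¹ ^ ((1/p+1/q)/α) * (Vp ^ ((1/α)/p) * Vq ^ ((1/α)/q)) :=
              add_le_add hIH hDc
          _ = (1 + ∑ r ∈ Finset.range (n+1), ((r:ℝ≥0∞)+1)⁻¹ ^ ((1/p+1/q)/α)) *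
                (Vp ^ ((1/α)/p) * Vq ^ ((1/α)/q)) := by
              rw [Finset.sum_range_succ]
              ring
/-- one-point removal estimate for discrete 2D Young–Towghi integrals.
For a dissection `D` of `[0,T]` with `n = m+2 ≥ 2` intervals and any dissection `D'`,
there is an interior point of `D` whose removal changes `∫_{D×D'} y dx` by at most
`(n-1)^{-α} (1+ζ(θ/α))^α V_p(x;[0,T]²) V_q(y;[0,T]²)`, for any `α ∈ (1,θ)`. -/
theorem young_towghi_point_removal (p q T α : ℝ) (hp : 1 ≤ p) (hq : 1 ≤ q)
    (hθ : 1 < 1 / p + 1 / q) (hα : 1 < α) (hαθ : α < 1 / p + 1 / q) (hT : 0 < T)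
    (x y : ℝ × ℝ → ℝ)
    (hx : gridVarSum p x (Rect.mk 0 T 0 T) ≠ ⊤)
    (hy : gridVarSum q y (Rect.mk 0 T 0 T) ≠ ⊤)
    (hy0 : ∀ r : ℝ, y (r, 0) = 0)
    (m k : ℕ) (t : Fin (m + 3) → ℝ) (s : Fin (k + 1) → ℝ)
    (ht : StrictMono t) (hs : Monotone s)
    (ht0 : t 0 = 0) (htlast : t (Fin.last (m + 2)) = T)
    (hs0 : s 0 = 0) (hslast : s (Fin.last k) = T) :
    ∃ i₀ : Fin (m + 3), i₀ ≠ 0 ∧ i₀ ≠ Fin.last (m + 2) ∧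
      ENNReal.ofReal
          |discInt2D (m + 2) k t s y x -
            discInt2D (m + 1) k (fun j => t (i₀.succAbove j)) s y x| ≤
        ((m + 1 : ℝ≥0∞))⁻¹ ^ α *
          ENNReal.ofReal ((1 + zetaSum ((1 / p + 1 / q) / α)) ^ α) *
          gridVarSum p x (Rect.mk 0 T 0 T) ^ (1 / p) *
          gridVarSum q y (Rect.mk 0 T 0 T) ^ (1 / q) := by
  have hp0 : 0 < p := lt_of_lt_of_le one_pos hp
  have hq0 : 0 < q := lt_of_lt_of_le one_pos hq
  have hα0 : 0 < α := lt_trans one_pos hα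
  have hpne : p ≠ 0 := hp0.ne'
  have hqne : q ≠ 0 := hq0.ne'
  have hαne : α ≠ 0 := hα0.ne'
  have hα1 : 0 < 1/α := by positivity
  have hθα : 1 < (1/p+1/q)/α := (one_lt_div hα0).mpr hαθ
  have hzeta : 0 ≤ zetaSum ((1/p+1/q)/α) :=
    tsum_nonneg (fun n => Real.rpow_nonneg (by positivity) _)
  have hexp_p : ((1/α)/p)*α = 1/p := by
    field_simp
  have hexp_q : ((1/α)/q)*α = 1/q := by
    field_simp
  set Vp := gridVarSum p x (Rect.mk 0 T 0 T) with hVp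
  set Vq := gridVarSum q y (Rect.mk 0 T 0 T) with hVq
  set Z := ENNReal.ofReal (zetaSum ((1/p+1/q)/α)) with hZ
  set Φ : Fin (m+1) → ℝ≥0∞ := fun i => ENNReal.ofReal
    |ytG x y (t i.castSucc.castSucc) (t i.succ.castSucc) (t i.succ.succ) k s| with hΦ
  obtain ⟨c, -, hmin⟩ := Finset.univ.exists_min_image Φ Finset.univ_nonempty
  have hcval : (c:ℕ) < m + 1 := c.isLt
  refine ⟨c.succ.castSucc, ?_, ?_, ?_⟩
  · simp only [ne_eq, Fin.ext_iff, Fin.coe_castSucc, Fin.val_succ, Fin.val_zero]; omega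
  · simp only [ne_eq, Fin.ext_iff, Fin.coe_castSucc, Fin.val_succ, Fin.val_last]
    omega
  have hdiff : discInt2D (m+2) k t s y x -
      discInt2D (m+1) k (fun j => t ((c.succ.castSucc : Fin (m+3)).succAbove j)) s y x =
      -(ytG x y (t c.castSucc.castSucc) (t c.succ.castSucc) (t c.succ.succ) k s) := by
    calc discInt2D (m+2) k t s y x -
        discInt2D (m+1) k (fun j => t ((c.succ.castSucc : Fin (m+3)).succAbove j)) s y x
        = (∑ j : Fin k, y (t c.castSucc.succ, s j.succ) *
            Rect.inc x ⟨t c.castSucc.castSucc, t c.castSucc.succ, s j.castSucc, s j.succ⟩)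
          + (∑ j : Fin k, y (t c.succ.succ, s j.succ) *
            Rect.inc x ⟨t c.succ.castSucc, t c.succ.succ, s j.castSucc, s j.succ⟩)
          - (∑ j : Fin k, y (t c.succ.succ, s j.succ) *
            Rect.inc x ⟨t c.castSucc.castSucc, t c.succ.succ, s j.castSucc, s j.succ⟩) :=
          yt_peel_sum c t (fun a b => ∑ j : Fin k, y (b, s j.succ) *
            Rect.inc x ⟨a, b, s j.castSucc, s j.succ⟩)
      _ = -(ytG x y (t c.castSucc.castSucc) (t c.succ.castSucc) (t c.succ.succ) k s) := by
          rw [Fin.succ_castSucc]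
          simp only [ytG, ← Finset.sum_neg_distrib]
          rw [← Finset.sum_add_distrib, ← Finset.sum_sub_distrib]
          refine Finset.sum_congr rfl fun j _ => ?_
          simp only [Rect.inc, hy0]
          ring
  have habs : ENNReal.ofReal |discInt2D (m+2) k t s y x -
      discInt2D (m+1) k (fun j => t ((c.succ.castSucc : Fin (m+3)).succAbove j)) s y x| = Φ c := by
    rw [hdiff, abs_neg, hΦ]
  rw [habs]
  have hcore := yt_core p q T α hp hq hθ hα hαθ x y m t ht.monotone ht0 htlast k s hs hs0 hslast
  have hzk : (1 + ∑ r ∈ Finset.range (k-1), ((r:ℝ≥0∞)+1)⁻¹ ^ ((1/p+1/q)/α)) ≤ 1 + Z :=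
    add_le_add_right (yt_zeta_bound hθα (k-1)) 1
  have hcore2 : ∑ i : Fin (m+1), (Φ i) ^ (1/α) ≤ (1 + Z) * (Vp ^ ((1/α)/p) * Vq ^ ((1/α)/q)) := by
    refine le_trans hcore (mul_le_mul_left hzk _)
  have hne0 : ((m:ℝ≥0∞)+1) ≠ 0 := by simp
  have hnetop : ((m:ℝ≥0∞)+1) ≠ ⊤ :=
    ENNReal.add_ne_top.mpr ⟨ENNReal.natCast_ne_top m, ENNReal.one_ne_top⟩
  have hcard : ((m:ℝ≥0∞)+1) * (Φ c)^(1/α) ≤ ∑ i : Fin (m+1), (Φ i)^(1/α) := by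
    have h := Finset.card_nsmul_le_sum Finset.univ (fun i => (Φ i)^(1/α)) ((Φ c)^(1/α))
      (fun i _ => ENNReal.rpow_le_rpow (hmin i (Finset.mem_univ i)) hα1.le)
    rw [Finset.card_univ, Fintype.card_fin, nsmul_eq_mul] at h
    push_cast at h
    exact h
  have hmean : (Φ c)^(1/α) ≤ ((m:ℝ≥0∞)+1)⁻¹ * ((1 + Z) * (Vp ^ ((1/α)/p) * Vq ^ ((1/α)/q))) := by
    calc (Φ c)^(1/α) = ((m:ℝ≥0∞)+1)⁻¹ * (((m:ℝ≥0∞)+1) * (Φ c)^(1/α)) := by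
          rw [← mul_assoc, ENNReal.inv_mul_cancel hne0 hnetop, one_mul]
      _ ≤ ((m:ℝ≥0∞)+1)⁻¹ * (∑ i : Fin (m+1), (Φ i)^(1/α)) := mul_le_mul_right hcard _
      _ ≤ _ := mul_le_mul_right hcore2 _
  calc Φ c = ((Φ c)^(1/α))^α := by
        rw [← ENNReal.rpow_mul, one_div, inv_mul_cancel₀ hαne, ENNReal.rpow_one]
    _ ≤ (((m:ℝ≥0∞)+1)⁻¹ * ((1 + Z) * (Vp ^ ((1/α)/p) * Vq ^ ((1/α)/q))))^α :=
        ENNReal.rpow_le_rpow hmean hα0.le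
    _ = ((m:ℝ≥0∞)+1)⁻¹^α * ((1 + Z)^α * (Vp ^ (1/p) * Vq ^ (1/q))) := by
        rw [ENNReal.mul_rpow_of_nonneg _ _ hα0.le, ENNReal.mul_rpow_of_nonneg _ _ hα0.le,
          ENNReal.mul_rpow_of_nonneg (Vp ^ ((1/α)/p)) _ hα0.le,
          ← ENNReal.rpow_mul, ← ENNReal.rpow_mul, hexp_p, hexp_q]
    _ = ((m:ℝ≥0∞)+1)⁻¹^α * ENNReal.ofReal ((1 + zetaSum ((1/p+1/q)/α)) ^ α) *
          Vp ^ (1/p) * Vq ^ (1/q) := by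
        rw [hZ, ← ENNReal.ofReal_one, ← ENNReal.ofReal_add zero_le_one hzeta,
          ENNReal.ofReal_rpow_of_pos (by linarith)]
        ring
end

section
/- Super-additivity of controlled p-variation implies a one-sided monotone continuity ('inner continuity'): if f : [0,T]^2 → ℝ is continuous with finite controlled p-variation and ω(R) := |f|^p_{p-var;R}, then for every rectangle A = [a_1,a_2]×[a_3,a_4] with a_1 < a_2, a_3 < a_4, one has ω(A) = lim_{r↓0} ω([a_1+r, a_2−r]×[a_3+r, a_4−r]). -/
open Set
open scoped ENNReal NNReal

-- auxiliary lemmas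
lemma le_cVarSum {p : ℝ} {f : ℝ × ℝ → ℝ} {R : Rect} {P : Finset Rect} (h : IsPartition R P) :
    ∑ Q ∈ P, ENNReal.ofReal |Rect.inc f Q| ^ p ≤ cVarSum p f R :=
  le_iSup₂ (f := fun (P : Finset Rect) (_ : IsPartition R P) =>
    ∑ Q ∈ P, ENNReal.ofReal |Rect.inc f Q| ^ p) P h

lemma cVarSum_mono_concentric (p : ℝ) (f : ℝ × ℝ → ℝ)
    {x1 x1' x2' x2 y1 y1' y2' y2 : ℝ}
    (ha : x1 ≤ x1') (hb : x1' ≤ x2') (hc : x2' ≤ x2)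
    (hd : y1 ≤ y1') (he : y1' ≤ y2') (hf : y2' ≤ y2) :
    cVarSum p f ⟨x1', x2', y1', y2'⟩ ≤ cVarSum p f ⟨x1, x2, y1, y2⟩ := by
  refine iSup₂_le fun P hP => ?_
  classical
  set B : Rect := ⟨x1, x2, y1, y1'⟩ with hB
  set Tt : Rect := ⟨x1, x2, y2', y2⟩ with hT
  set Ll : Rect := ⟨x1, x1', y1', y2'⟩ with hL
  set Rr : Rect := ⟨x2', x2, y1', y2'⟩ with hR
  set S : Finset Rect := {B, Tt, Ll, Rr} with hS
  obtain ⟨hval, hdisj, huni⟩ := hP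
  have hsubQ : ∀ Q ∈ P, Q.toSet ⊆ (Rect.mk x1' x2' y1' y2').toSet := by
    intro Q hQ
    rw [← huni]
    exact Set.subset_biUnion_of_mem hQ
  have hopensub : ∀ Q ∈ P, Q.openSet ⊆ (Rect.mk x1' x2' y1' y2').toSet := by
    intro Q hQ
    refine subset_trans ?_ (hsubQ Q hQ)
    exact Set.prod_mono Set.Ioo_subset_Icc_self Set.Ioo_subset_Icc_self
  have hpart : IsPartition ⟨x1, x2, y1, y2⟩ (P ∪ S) := by
    refine ⟨?_, ?_, ?_⟩
    · intro Q hQ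
      rcases Finset.mem_union.1 hQ with h | h
      · exact hval Q h
      · simp only [hS, Finset.mem_insert, Finset.mem_singleton] at h
        rcases h with rfl | rfl | rfl | rfl <;>
          exact ⟨by (try dsimp); linarith, by (try dsimp); linarith⟩
    · rw [Finset.coe_union]
      -- pairwise on union
      have hSdisj : ((S : Set Rect)).Pairwise fun Q Q' => Disjoint Q.openSet Q'.openSet := by
        have key : ∀ U V : Rect, (U = B ∨ U = Tt ∨ U = Ll ∨ U = Rr) →
            (V = B ∨ V = Tt ∨ V = Ll ∨ V = Rr) → U ≠ V → Disjoint U.openSet V.openSet := by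
          rintro U V hU hV hne
          have hd' : ∀ W W' : Rect, (∀ z : ℝ × ℝ, z ∈ W.openSet → z ∈ W'.openSet → False) →
              Disjoint W.openSet W'.openSet := by
            intro W W' h
            rw [Set.disjoint_left]
            exact fun {z} hz hz' => h z hz hz'
          rcases hU with rfl | rfl | rfl | rfl <;> rcases hV with rfl | rfl | rfl | rfl <;>
            first
            | exact absurd rfl hne
            | (refine hd' _ _ ?_
               rintro ⟨x, y⟩ ⟨⟨hx1, hx2⟩, hy1, hy2⟩ ⟨⟨hx1', hx2'⟩, hy1', hy2'⟩
               dsimp [hB, hT, hL, hR] at *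
               linarith)
        intro U hU V hV hne
        refine key U V ?_ ?_ hne
        · simpa [hS, Finset.coe_insert, Finset.coe_singleton] using hU
        · simpa [hS, Finset.coe_insert, Finset.coe_singleton] using hV
      refine Set.pairwise_union.2 ⟨hdisj, hSdisj, ?_⟩
      intro Q hQ V hV hne
      have hQo := hopensub Q hQ
      have hdisjQS : Disjoint Q.openSet V.openSet := by
        rw [Set.disjoint_left]
        rintro ⟨x, y⟩ hz hz'
        have hz2 := hQo hz
        simp only [Rect.toSet, Set.mem_prod, Set.mem_Icc] at hz2
        have hV' : V = B ∨ V = Tt ∨ V = Ll ∨ V = Rr := by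
          simpa [hS, Finset.coe_insert, Finset.coe_singleton] using hV
        rcases hV' with rfl | rfl | rfl | rfl <;>
          (simp only [Rect.openSet, Set.mem_prod, Set.mem_Ioo, hB, hT, hL, hR] at hz' ⊢;
           obtain ⟨⟨_, _⟩, _, _⟩ := hz'; obtain ⟨⟨_, _⟩, _, _⟩ := hz2; linarith)
      exact ⟨hdisjQS, hdisjQS.symm⟩
    · rw [Finset.set_biUnion_union, huni]
      ext ⟨x, y⟩
      simp only [hS, Finset.mem_insert, Finset.mem_singleton, Set.mem_iUnion, Set.mem_union,
        Rect.toSet, Set.mem_prod, Set.mem_Icc, exists_prop, hB, hT, hL, hR]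
      constructor
      · rintro (⟨⟨hx1, hx2⟩, hy1, hy2⟩ | ⟨Q, (rfl | rfl | rfl | rfl), hmem⟩) <;>
          first
          | (constructor <;> constructor <;> linarith)
          | (simp only [Rect.toSet, Set.mem_prod, Set.mem_Icc] at hmem;
             obtain ⟨⟨_, _⟩, _, _⟩ := hmem; constructor <;> constructor <;> linarith)
      · rintro ⟨⟨hx1, hx2⟩, hy1, hy2⟩
        by_cases hy1c : y ≤ y1'
        · exact Or.inr ⟨B, Or.inl rfl, by simp [Rect.toSet, hB]; exact ⟨⟨hx1, hx2⟩, hy1, hy1c⟩⟩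
        by_cases hy2c : y2' ≤ y
        · exact Or.inr ⟨Tt, Or.inr (Or.inl rfl), by simp [Rect.toSet, hT]; exact ⟨⟨hx1, hx2⟩, hy2c, hy2⟩⟩
        push_neg at hy1c hy2c
        by_cases hx1c : x ≤ x1'
        · exact Or.inr ⟨Ll, Or.inr (Or.inr (Or.inl rfl)), by
            simp [Rect.toSet, hL]; exact ⟨⟨hx1, hx1c⟩, le_of_lt hy1c, le_of_lt hy2c⟩⟩
        by_cases hx2c : x2' ≤ x
        · exact Or.inr ⟨Rr, Or.inr (Or.inr (Or.inr rfl)), by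
            simp [Rect.toSet, hR]; exact ⟨⟨hx2c, hx2⟩, le_of_lt hy1c, le_of_lt hy2c⟩⟩
        push_neg at hx1c hx2c
        exact Or.inl ⟨⟨le_of_lt hx1c, le_of_lt hx2c⟩, le_of_lt hy1c, le_of_lt hy2c⟩
  calc ∑ Q ∈ P, ENNReal.ofReal |Rect.inc f Q| ^ p
      ≤ ∑ Q ∈ P ∪ S, ENNReal.ofReal |Rect.inc f Q| ^ p :=
        Finset.sum_le_sum_of_subset Finset.subset_union_left
    _ ≤ _ := le_cVarSum hpart

noncomputable def phi (u v r x : ℝ) : ℝ := u + r + (x - u) * ((v - u - 2*r) / (v - u))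
noncomputable def psi (u v r y : ℝ) : ℝ := u + (y - u - r) * ((v - u) / (v - u - 2*r))

section phi
variable {u v r x y : ℝ} (huv : u < v) (hs : 0 < v - u - 2*r)
include huv hs

lemma phi_le_phi_iff : phi u v r x ≤ phi u v r y ↔ x ≤ y := by
  unfold phi
  have hq : 0 < (v - u - 2*r) / (v - u) := div_pos hs (by linarith)
  rw [add_le_add_iff_left, mul_le_mul_iff_of_pos_right hq, sub_le_sub_iff_right]

lemma phi_lt_phi_iff : phi u v r x < phi u v r y ↔ x < y :=
  lt_iff_lt_of_le_iff_le (phi_le_phi_iff huv hs)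

lemma phi_psi : phi u v r (psi u v r y) = y := by
  unfold phi psi
  have h1 : v - u ≠ 0 := by linarith
  have h2 : v - u - 2*r ≠ 0 := by linarith
  rw [add_sub_cancel_left, mul_assoc, div_mul_div_comm, mul_comm (v - u), div_self (mul_ne_zero h2 h1)]; ring

lemma phi_le_iff : phi u v r x ≤ y ↔ x ≤ psi u v r y := by
  conv_lhs => rw [show y = phi u v r (psi u v r y) from (phi_psi huv hs).symm]
  exact phi_le_phi_iff huv hs

lemma le_phi_iff : y ≤ phi u v r x ↔ psi u v r y ≤ x := by
  conv_lhs => rw [show y = phi u v r (psi u v r y) from (phi_psi huv hs).symm]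
  exact phi_le_phi_iff huv hs

lemma phi_lt_iff : phi u v r x < y ↔ x < psi u v r y :=
  lt_iff_lt_of_le_iff_le (le_phi_iff huv hs)

lemma lt_phi_iff : y < phi u v r x ↔ psi u v r y < x :=
  lt_iff_lt_of_le_iff_le (phi_le_iff huv hs)

lemma phi_left : phi u v r u = u + r := by unfold phi; ring

lemma phi_right : phi u v r v = v - r := by
  unfold phi
  have h1 : v - u ≠ 0 := by linarith
  field_simp
  ring

end phi

noncomputable def shrinkR (a₁ a₂ a₃ a₄ r : ℝ) (Q : Rect) : Rect :=
  ⟨phi a₁ a₂ r Q.a, phi a₁ a₂ r Q.b, phi a₃ a₄ r Q.c, phi a₃ a₄ r Q.d⟩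

lemma shrink_partition {a₁ a₂ a₃ a₄ r : ℝ} (h12 : a₁ < a₂) (h34 : a₃ < a₄)
    (hrx : 0 < a₂ - a₁ - 2*r) (hry : 0 < a₄ - a₃ - 2*r)
    {P : Finset Rect} (hP : IsPartition ⟨a₁, a₂, a₃, a₄⟩ P) :
    IsPartition ⟨a₁ + r, a₂ - r, a₃ + r, a₄ - r⟩ (P.image (shrinkR a₁ a₂ a₃ a₄ r)) := by
  classical
  obtain ⟨hval, hdisj, huni⟩ := hP
  have memToSet : ∀ (Q : Rect) (w : ℝ × ℝ),
      w ∈ (shrinkR a₁ a₂ a₃ a₄ r Q).toSet ↔ (psi a₁ a₂ r w.1, psi a₃ a₄ r w.2) ∈ Q.toSet := by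
    intro Q w
    simp only [shrinkR, Rect.toSet, Set.mem_prod, Set.mem_Icc]
    rw [phi_le_iff h12 hrx, le_phi_iff h12 hrx, phi_le_iff h34 hry, le_phi_iff h34 hry]
  have memOpen : ∀ (Q : Rect) (w : ℝ × ℝ),
      w ∈ (shrinkR a₁ a₂ a₃ a₄ r Q).openSet ↔ (psi a₁ a₂ r w.1, psi a₃ a₄ r w.2) ∈ Q.openSet := by
    intro Q w
    simp only [shrinkR, Rect.openSet, Set.mem_prod, Set.mem_Ioo]
    rw [phi_lt_iff h12 hrx, lt_phi_iff h12 hrx, phi_lt_iff h34 hry, lt_phi_iff h34 hry]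
  refine ⟨?_, ?_, ?_⟩
  · intro Q hQ
    obtain ⟨Q', hQ', rfl⟩ := Finset.mem_image.1 hQ
    obtain ⟨h1, h2⟩ := hval Q' hQ'
    exact ⟨(phi_le_phi_iff h12 hrx).2 h1, (phi_le_phi_iff h34 hry).2 h2⟩
  · intro U hU V hV hne
    obtain ⟨QU, hQU, rfl⟩ := Finset.mem_image.1 (Finset.mem_coe.1 hU)
    obtain ⟨QV, hQV, rfl⟩ := Finset.mem_image.1 (Finset.mem_coe.1 hV)
    have hQne : QU ≠ QV := fun h => hne (by rw [h])
    have hd := hdisj (Finset.mem_coe.2 hQU) (Finset.mem_coe.2 hQV) hQne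
    dsimp only at hd
    rw [Set.disjoint_left] at hd ⊢
    intro w hw hw'
    exact hd ((memOpen QU w).1 hw) ((memOpen QV w).1 hw')
  · ext w
    have hiff : w ∈ (Rect.mk (a₁+r) (a₂-r) (a₃+r) (a₄-r)).toSet ↔
        (psi a₁ a₂ r w.1, psi a₃ a₄ r w.2) ∈ (Rect.mk a₁ a₂ a₃ a₄).toSet := by
      simp only [Rect.toSet, Set.mem_prod, Set.mem_Icc]
      rw [show a₁ + r = phi a₁ a₂ r a₁ from (phi_left h12 hrx).symm,
        show a₂ - r = phi a₁ a₂ r a₂ from (phi_right h12 hrx).symm,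
        show a₃ + r = phi a₃ a₄ r a₃ from (phi_left h34 hry).symm,
        show a₄ - r = phi a₃ a₄ r a₄ from (phi_right h34 hry).symm,
        phi_le_iff h12 hrx, le_phi_iff h12 hrx, phi_le_iff h34 hry, le_phi_iff h34 hry]
    rw [hiff, ← huni]
    simp only [Set.mem_iUnion, exists_prop]
    constructor
    · rintro ⟨Qs, hQs, hmem⟩
      obtain ⟨Q, hQ, rfl⟩ := Finset.mem_image.1 hQs
      exact ⟨Q, hQ, (memToSet Q w).1 hmem⟩
    · rintro ⟨Q, hQ, hmem⟩
      exact ⟨shrinkR a₁ a₂ a₃ a₄ r Q, Finset.mem_image_of_mem _ hQ, (memToSet Q w).2 hmem⟩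

lemma shrink_inj {a₁ a₂ a₃ a₄ r : ℝ} (h12 : a₁ < a₂) (h34 : a₃ < a₄)
    (hrx : 0 < a₂ - a₁ - 2*r) (hry : 0 < a₄ - a₃ - 2*r) :
    Function.Injective (shrinkR a₁ a₂ a₃ a₄ r) := by
  have hx : Function.Injective (phi a₁ a₂ r) := fun x y h =>
    le_antisymm ((phi_le_phi_iff h12 hrx).1 h.le) ((phi_le_phi_iff h12 hrx).1 h.ge)
  have hy : Function.Injective (phi a₃ a₄ r) := fun x y h =>
    le_antisymm ((phi_le_phi_iff h34 hry).1 h.le) ((phi_le_phi_iff h34 hry).1 h.ge)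
  rintro ⟨qa, qb, qc, qd⟩ ⟨qa', qb', qc', qd'⟩ h
  simp only [shrinkR, Rect.mk.injEq] at h ⊢
  exact ⟨hx h.1, hx h.2.1, hy h.2.2.1, hy h.2.2.2⟩

lemma phi_zero {u v x : ℝ} (huv : u < v) : phi u v 0 x = x := by
  unfold phi
  have : v - u ≠ 0 := by linarith
  field_simp
  ring


open Filter Topology

/-- inner continuity: if `f : [0,T]² → ℝ` is continuous with finite
controlled `p`-variation and `ω(R) := |f|^p_{p-var;R}`, then for any nondegenerate
rectangle `A = [a₁,a₂]×[a₃,a₄] ⊆ [0,T]²`,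
`ω(A) = lim_{r↓0} ω([a₁+r,a₂-r]×[a₃+r,a₄-r])`. -/
theorem controlled_var_inner_continuity (p T : ℝ) (hp : 1 ≤ p) (hT : 0 < T)
    (f : ℝ × ℝ → ℝ) (hcont : ContinuousOn f (Rect.mk 0 T 0 T).toSet)
    (hf : cVarSum p f (Rect.mk 0 T 0 T) ≠ ⊤)
    (a₁ a₂ a₃ a₄ : ℝ) (h1 : 0 ≤ a₁) (h12 : a₁ < a₂) (h2 : a₂ ≤ T)
    (h3 : 0 ≤ a₃) (h34 : a₃ < a₄) (h4 : a₄ ≤ T) :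
    Tendsto (fun r : ℝ => cVarSum p f (Rect.mk (a₁ + r) (a₂ - r) (a₃ + r) (a₄ - r)))
      (𝓝[>] 0) (𝓝 (cVarSum p f (Rect.mk a₁ a₂ a₃ a₄))) := by
  classical
  have hp0 : (0:ℝ) < p := by linarith
  set δ : ℝ := min ((a₂ - a₁)/2) ((a₄ - a₃)/2) with hδdef
  have hδ : 0 < δ := lt_min (by linarith) (by linarith)
  have hmem : Set.Ioo (0:ℝ) δ ∈ 𝓝[>] (0:ℝ) := Ioo_mem_nhdsGT hδ
  have hrx : ∀ r ∈ Set.Ioo (0:ℝ) δ, 0 < a₂ - a₁ - 2*r ∧ 0 < a₄ - a₃ - 2*r := by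
    rintro r ⟨hr0, hrδ⟩
    have hx := lt_of_lt_of_le hrδ (min_le_left _ _)
    have hy := lt_of_lt_of_le hrδ (min_le_right _ _)
    exact ⟨by linarith, by linarith⟩
  have hsubA : (Rect.mk a₁ a₂ a₃ a₄).toSet ⊆ (Rect.mk 0 T 0 T).toSet :=
    Set.prod_mono (Set.Icc_subset_Icc h1 h2) (Set.Icc_subset_Icc h3 h4)
  have hcontA : ContinuousOn f (Rect.mk a₁ a₂ a₃ a₄).toSet := hcont.mono hsubA
  -- corner convergence
  have corner : ∀ u v : ℝ, (u, v) ∈ (Rect.mk a₁ a₂ a₃ a₄).toSet →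
      Tendsto (fun r => f (phi a₁ a₂ r u, phi a₃ a₄ r v)) (𝓝[>] (0:ℝ)) (𝓝 (f (u, v))) := by
    intro u v huv
    have hcw : ContinuousWithinAt f (Rect.mk a₁ a₂ a₃ a₄).toSet (u, v) := hcontA (u, v) huv
    refine hcw.tendsto.comp ?_
    rw [tendsto_nhdsWithin_iff]
    constructor
    · have hc1 : Continuous (fun r : ℝ => phi a₁ a₂ r u) := by
        unfold phi; fun_prop
      have hc2 : Continuous (fun r : ℝ => phi a₃ a₄ r v) := by
        unfold phi; fun_prop
      have := (hc1.tendsto 0).prodMk_nhds (hc2.tendsto 0)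
      rw [phi_zero h12, phi_zero h34] at this
      exact this.mono_left nhdsWithin_le_nhds
    · filter_upwards [hmem] with r hr
      obtain ⟨hx', hy'⟩ := hrx r hr
      simp only [Rect.toSet, Set.mem_prod, Set.mem_Icc] at huv ⊢
      obtain ⟨⟨hu1, hu2⟩, hv1, hv2⟩ := huv
      have e1 : phi a₁ a₂ r a₁ ≤ phi a₁ a₂ r u := (phi_le_phi_iff h12 hx').2 hu1
      have e2 : phi a₁ a₂ r u ≤ phi a₁ a₂ r a₂ := (phi_le_phi_iff h12 hx').2 hu2
      have e3 : phi a₃ a₄ r a₃ ≤ phi a₃ a₄ r v := (phi_le_phi_iff h34 hy').2 hv1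
      have e4 : phi a₃ a₄ r v ≤ phi a₃ a₄ r a₄ := (phi_le_phi_iff h34 hy').2 hv2
      rw [phi_left h12 hx'] at e1
      rw [phi_right h12 hx'] at e2
      rw [phi_left h34 hy'] at e3
      rw [phi_right h34 hy'] at e4
      have hr0 := hr.1
      exact ⟨⟨by linarith, by linarith⟩, by linarith, by linarith⟩
  rw [tendsto_order]
  constructor
  · -- lower bound
    intro b hb
    simp only [cVarSum, lt_iSup_iff] at hb
    obtain ⟨P, hP, hb⟩ := hb
    have hval := hP.1
    have huni := hP.2.2
    have hQsub : ∀ Q ∈ P, Q.toSet ⊆ (Rect.mk a₁ a₂ a₃ a₄).toSet := by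
      intro Q hQ
      rw [← huni]
      exact Set.subset_biUnion_of_mem hQ
    have key : ∀ h : Rect → Rect,
        ENNReal.ofReal (∑ Q ∈ P, |Rect.inc f (h Q)| ^ p)
          = ∑ Q ∈ P, ENNReal.ofReal |Rect.inc f (h Q)| ^ p := by
      intro h
      rw [ENNReal.ofReal_sum_of_nonneg (fun Q _ => Real.rpow_nonneg (abs_nonneg _) p)]
      exact Finset.sum_congr rfl fun Q _ =>
        (ENNReal.ofReal_rpow_of_nonneg (abs_nonneg _) hp0.le).symm
    have hsumreal : Tendsto
        (fun r => ∑ Q ∈ P, |Rect.inc f (shrinkR a₁ a₂ a₃ a₄ r Q)| ^ p)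
        (𝓝[>] (0:ℝ)) (𝓝 (∑ Q ∈ P, |Rect.inc f Q| ^ p)) := by
      refine tendsto_finset_sum _ fun Q hQ => ?_
      obtain ⟨hab, hcd⟩ := hval Q hQ
      have cbd : (Q.b, Q.d) ∈ (Rect.mk a₁ a₂ a₃ a₄).toSet :=
        hQsub Q hQ ⟨⟨hab, le_refl _⟩, ⟨hcd, le_refl _⟩⟩
      have cad : (Q.a, Q.d) ∈ (Rect.mk a₁ a₂ a₃ a₄).toSet :=
        hQsub Q hQ ⟨⟨le_refl _, hab⟩, ⟨hcd, le_refl _⟩⟩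
      have cbc : (Q.b, Q.c) ∈ (Rect.mk a₁ a₂ a₃ a₄).toSet :=
        hQsub Q hQ ⟨⟨hab, le_refl _⟩, ⟨le_refl _, hcd⟩⟩
      have cac : (Q.a, Q.c) ∈ (Rect.mk a₁ a₂ a₃ a₄).toSet :=
        hQsub Q hQ ⟨⟨le_refl _, hab⟩, ⟨le_refl _, hcd⟩⟩
      have hinc : Tendsto (fun r => Rect.inc f (shrinkR a₁ a₂ a₃ a₄ r Q))
          (𝓝[>] (0:ℝ)) (𝓝 (Rect.inc f Q)) := by
        have := (((corner Q.b Q.d cbd).sub (corner Q.a Q.d cad)).sub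
          (corner Q.b Q.c cbc)).add (corner Q.a Q.c cac)
        exact this
      have hpow : ContinuousAt (fun x : ℝ => x ^ p) |Rect.inc f Q| :=
        Real.continuousAt_rpow_const _ _ (Or.inr hp0.le)
      exact hpow.tendsto.comp hinc.abs
    have htend : Tendsto
        (fun r => ∑ Q ∈ P, ENNReal.ofReal |Rect.inc f (shrinkR a₁ a₂ a₃ a₄ r Q)| ^ p)
        (𝓝[>] (0:ℝ)) (𝓝 (∑ Q ∈ P, ENNReal.ofReal |Rect.inc f Q| ^ p)) := by
      have h2 := (ENNReal.continuous_ofReal.tendsto _).comp hsumreal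
      have e1 : (fun r => ∑ Q ∈ P, ENNReal.ofReal |Rect.inc f (shrinkR a₁ a₂ a₃ a₄ r Q)| ^ p)
          = fun r => ENNReal.ofReal (∑ Q ∈ P, |Rect.inc f (shrinkR a₁ a₂ a₃ a₄ r Q)| ^ p) :=
        funext fun r => (key (shrinkR a₁ a₂ a₃ a₄ r)).symm
      have e2 : (∑ Q ∈ P, ENNReal.ofReal |Rect.inc f Q| ^ p)
          = ENNReal.ofReal (∑ Q ∈ P, |Rect.inc f Q| ^ p) := (key (fun Q => Q)).symm
      rw [e1, e2]
      exact h2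
    filter_upwards [htend.eventually_const_lt hb, hmem] with r hlt hr
    obtain ⟨hx', hy'⟩ := hrx r hr
    have hpart := shrink_partition h12 h34 hx' hy' hP
    have hsum : ∑ Q ∈ P.image (shrinkR a₁ a₂ a₃ a₄ r), ENNReal.ofReal |Rect.inc f Q| ^ p
        = ∑ Q ∈ P, ENNReal.ofReal |Rect.inc f (shrinkR a₁ a₂ a₃ a₄ r Q)| ^ p :=
      Finset.sum_image fun Q _ Q' _ h => shrink_inj h12 h34 hx' hy' h
    calc b < ∑ Q ∈ P, ENNReal.ofReal |Rect.inc f (shrinkR a₁ a₂ a₃ a₄ r Q)| ^ p := hlt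
      _ = ∑ Q ∈ P.image (shrinkR a₁ a₂ a₃ a₄ r), ENNReal.ofReal |Rect.inc f Q| ^ p := hsum.symm
      _ ≤ cVarSum p f (Rect.mk (a₁ + r) (a₂ - r) (a₃ + r) (a₄ - r)) := le_cVarSum hpart
  · -- upper bound
    intro b hb
    filter_upwards [hmem] with r hr
    obtain ⟨hx', hy'⟩ := hrx r hr
    have hr0 := hr.1
    calc cVarSum p f (Rect.mk (a₁ + r) (a₂ - r) (a₃ + r) (a₄ - r))
        ≤ cVarSum p f (Rect.mk a₁ a₂ a₃ a₄) :=
          cVarSum_mono_concentric p f (by linarith) (by linarith) (by linarith)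
            (by linarith) (by linarith) (by linarith)
      _ < b := hb
end
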